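/- arXiv:2505.01353 — 3 statements merged into one kernel-verified Lean document; each statement's English description precedes it below -/
import Mathlib

section
/- Consider the parametric NLP min_{z∈ℝⁿ} f(z;θ) s.t. g(z;θ)=0, h(z;θ)≤0 and suppose (z*,λ*,μ*) is a KKT point at θ̄ satisfying LICQ, SOSC and strict complementarity. Define the parametric QP with exact Hessian: minimize over Δz the function ∇_z f(z*;θ)ᵀΔz + ½ΔzᵀQ*Δz subject to g(z*;θ)+∇_z g(z*;θ)ᵀΔz = 0 and h(z*;θ)+∇_z h(z*;θ)ᵀΔz ≤ 0, where Q* = ∇²_{zz}L(z*,λ*,μ*;θ̄). Let z^sol(θ), λ^sol(θ), μ^sol(θ) be the local NLP KKT solution maps around θ̄, and let Δz_QP(θ), λ_QP(θ), μ_QP(θ) be the local QP KKT solution maps around θ̄ with Δz_QP(θ̄)=0, λ_QP(θ̄)=λ*, μ_QP(θ̄)=μ*. Then z^sol(θ̄) = z* + Δz_QP(θ̄) and the derivatives at θ̄ coincide: D_θ z^sol(θ̄) = D_θ Δz_QP(θ̄), D_θ λ^sol(θ̄) = D_θ λ_QP(θ̄), and D_θ μ^sol(θ̄) = D_θ μ_QP(θ̄).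 -/
open Filter Topology

section auxHelpers


variable {E P : Type*} [NormedAddCommGroup E] [NormedSpace ℝ E]
  [NormedAddCommGroup P] [NormedSpace ℝ P]

lemma hasFDerivAt_partial1 {F : E × P → ℝ} {y : E} {θ : P}
    (hF : DifferentiableAt ℝ F (y, θ)) :
    HasFDerivAt (fun z => F (z, θ))
      ((fderiv ℝ F (y, θ)).comp ((ContinuousLinearMap.id ℝ E).prod 0)) y :=
  hF.hasFDerivAt.comp y ((hasFDerivAt_id y).prodMk (hasFDerivAt_const θ y))

lemma fderiv_partial1 {F : E × P → ℝ} {y : E} {θ : P}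
    (hF : DifferentiableAt ℝ F (y, θ)) (e : E) :
    fderiv ℝ (fun z => F (z, θ)) y e = fderiv ℝ F (y, θ) (e, 0) := by
  rw [(hasFDerivAt_partial1 hF).fderiv]; rfl

lemma hasFDerivAt_fderiv_pairing {F : E × P → ℝ} (hF : ContDiff ℝ 2 F) (c : E)
    {u : P → E} {θ0 : P} {Du : P →L[ℝ] E} (hu : HasFDerivAt u Du θ0) (hu0 : u θ0 = 0) :
    HasFDerivAt (fun θ => fderiv ℝ (fun z => F (z, θ)) c (u θ))
      ((fderiv ℝ F (c, θ0)).comp (Du.prod 0)) θ0 := by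
  have hdiff : Differentiable ℝ F := hF.differentiable (by norm_num)
  have hdF : ContDiff ℝ 1 (fderiv ℝ F) := hF.fderiv_right (le_refl 2)
  have h1 : HasFDerivAt (fderiv ℝ F) (fderiv ℝ (fderiv ℝ F) (c, θ0)) (c, θ0) :=
    (hdF.differentiable one_ne_zero (c, θ0)).hasFDerivAt
  have h2 : HasFDerivAt (fun θ : P => ((c, θ) : E × P))
      (((0 : P →L[ℝ] E)).prod (ContinuousLinearMap.id ℝ P)) θ0 :=
    (hasFDerivAt_const c θ0).prodMk (hasFDerivAt_id θ0)
  have h3 := HasFDerivAt.comp (f := fun θ : P => ((c, θ) : E × P)) θ0 h1 h2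
  have h4 : HasFDerivAt (fun θ : P => ((u θ, 0) : E × P))
      (Du.prod (0 : P →L[ℝ] P)) θ0 := hu.prodMk (hasFDerivAt_const 0 θ0)
  have h5 := h3.clm_apply h4
  have h6 : HasFDerivAt (fun θ => fderiv ℝ F (c, θ) ((u θ, 0) : E × P))
      ((fderiv ℝ F (c, θ0)).comp (Du.prod 0)) θ0 := by
    refine h5.congr_fderiv ?_
    rw [hu0]
    ext v
    simp
    exact map_zero ((fderiv ℝ (fderiv ℝ F) (c, θ0)) (0, v))
  exact h6.congr_of_eventuallyEq (Filter.Eventually.of_forall fun θ =>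
    (fderiv_partial1 (hdiff _) (u θ)))

noncomputable def inclE (E P : Type*) [NormedAddCommGroup E] [NormedSpace ℝ E]
    [NormedAddCommGroup P] [NormedSpace ℝ P] : E →L[ℝ] E × P :=
  (ContinuousLinearMap.id ℝ E).prod 0

lemma hasFDerivAt_inner_fderiv {F : E × P → ℝ} (hF : ContDiff ℝ 2 F) (zs : E) (θ0 : P) :
    HasFDerivAt (fun z => fderiv ℝ (fun y => F (y, θ0)) z)
      (((ContinuousLinearMap.compL ℝ E (E × P) ℝ).flip (inclE E P)).comp
        ((fderiv ℝ (fderiv ℝ F) (zs, θ0)).comp (inclE E P))) zs := by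
  have hdiff : Differentiable ℝ F := hF.differentiable (by norm_num)
  have hdF : ContDiff ℝ 1 (fderiv ℝ F) := hF.fderiv_right (le_refl 2)
  have h1 : HasFDerivAt (fderiv ℝ F) (fderiv ℝ (fderiv ℝ F) (zs, θ0)) (zs, θ0) :=
    (hdF.differentiable one_ne_zero (zs, θ0)).hasFDerivAt
  have h2 : HasFDerivAt (fun z : E => ((z, θ0) : E × P)) (inclE E P) zs :=
    (hasFDerivAt_id zs).prodMk (hasFDerivAt_const θ0 zs)
  have h3 := HasFDerivAt.comp (f := fun z : E => ((z, θ0) : E × P)) zs h1 h2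
  have h4 := (((ContinuousLinearMap.compL ℝ E (E × P) ℝ).flip
      (inclE E P)).hasFDerivAt (x := fderiv ℝ F (zs, θ0))).comp zs h3
  exact h4.congr_of_eventuallyEq (Filter.Eventually.of_forall fun z => by
    have := (hasFDerivAt_partial1 (F := F) (y := z) (θ := θ0) (hdiff _)).fderiv
    simp only [this]
    rfl)

lemma second_partial_eq {F : E × P → ℝ} (hF : ContDiff ℝ 2 F) (zs : E) (θ0 : P)
    (w e : E) :
    fderiv ℝ (fun z => fderiv ℝ (fun y => F (y, θ0)) z) zs w e
      = fderiv ℝ (fderiv ℝ F) (zs, θ0) (w, 0) (e, 0) := by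
  rw [(hasFDerivAt_inner_fderiv hF zs θ0).fderiv]
  rfl

lemma sosc_link {F : E × P → ℝ} (hF : ContDiff ℝ 2 F) (zs : E) (θ0 : P) (d : E) :
    fderiv ℝ (fun z => fderiv ℝ (fun y => F (y, θ0)) z d) zs d
      = fderiv ℝ (fderiv ℝ F) (zs, θ0) (d, 0) (d, 0) := by
  have h := (hasFDerivAt_inner_fderiv hF zs θ0).clm_apply (hasFDerivAt_const d zs)
  rw [h.fderiv]
  simp [inclE]

lemma fderiv_zero_of_eventually_zero {φ : P → ℝ} {D : P →L[ℝ] ℝ} {θ0 : P}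
    (h : HasFDerivAt φ D θ0) (h0 : ∀ᶠ θ in 𝓝 θ0, φ θ = 0) : D = 0 :=
  h.unique ((hasFDerivAt_const (0 : ℝ) θ0).congr_of_eventuallyEq
    (by filter_upwards [h0] with θ hθ; simp [hθ]))

/-- derivative of `θ ↦ D_z F(x θ, θ) e`. -/
lemma hasFDerivAt_fderiv_partial {F : E × P → ℝ} (hF : ContDiff ℝ 2 F)
    {x : P → E} {θ0 : P} {Dx : P →L[ℝ] E} (hx : HasFDerivAt x Dx θ0) (e : E) :
    HasFDerivAt (fun θ => fderiv ℝ (fun z => F (z, θ)) (x θ) e)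
      (((fderiv ℝ (fderiv ℝ F) (x θ0, θ0)).flip (e, 0)).comp
        (Dx.prod (ContinuousLinearMap.id ℝ P))) θ0 := by
  have hdiff : Differentiable ℝ F := hF.differentiable (by norm_num)
  have hdF : ContDiff ℝ 1 (fderiv ℝ F) := hF.fderiv_right (le_refl 2)
  have h1 : HasFDerivAt (fderiv ℝ F) (fderiv ℝ (fderiv ℝ F) (x θ0, θ0)) (x θ0, θ0) :=
    (hdF.differentiable one_ne_zero (x θ0, θ0)).hasFDerivAt
  have h2 : HasFDerivAt (fun θ => (x θ, θ)) (Dx.prod (ContinuousLinearMap.id ℝ P)) θ0 :=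
    hx.prodMk (hasFDerivAt_id θ0)
  have h3 : HasFDerivAt (fun θ => fderiv ℝ F (x θ, θ))
      ((fderiv ℝ (fderiv ℝ F) (x θ0, θ0)).comp (Dx.prod (ContinuousLinearMap.id ℝ P))) θ0 :=
    HasFDerivAt.comp (f := fun θ => (x θ, θ)) θ0 h1 h2
  have h4 := h3.clm_apply (hasFDerivAt_const ((e, 0) : E × P) θ0)
  have h5 : HasFDerivAt (fun θ => fderiv ℝ F (x θ, θ) (e, 0))
      (((fderiv ℝ (fderiv ℝ F) (x θ0, θ0)).flip (e, 0)).comp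
        (Dx.prod (ContinuousLinearMap.id ℝ P))) θ0 := by
    refine h4.congr_fderiv ?_
    ext v
    simp
  exact h5.congr_of_eventuallyEq (Filter.Eventually.of_forall fun θ =>
    (fderiv_partial1 (hdiff _) e))


end auxHelpers

set_option maxHeartbeats 1000000

open Filter Topology

/-- **Theorem 2 (NLP and QP sensitivities coincide).**
Let `(z*, λ*, μ*)` be a KKT point of the parametric NLP at `θ̄` satisfying LICQ, SOSC and
strict complementarity, and let `Q* = ∇²_zz L(z*, λ*, μ*; θ̄)` be the exact Lagrangian
Hessian.  If `θ ↦ (z^sol(θ), λ^sol(θ), μ^sol(θ))` is a C¹ local KKT-solution map of the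
NLP around `θ̄` through `(z*, λ*, μ*)`, and `θ ↦ (Δz_QP(θ), λ_QP(θ), μ_QP(θ))` is a C¹
local KKT-solution map of the exact-Hessian QP subproblem around `θ̄` with
`Δz_QP(θ̄) = 0`, `λ_QP(θ̄) = λ*`, `μ_QP(θ̄) = μ*`, then `z^sol(θ̄) = z* + Δz_QP(θ̄)` and
the derivatives at `θ̄` coincide. -/
theorem nlp_qp_sensitivities_coincide
    {n p m q : ℕ}
    (f : (Fin n → ℝ) → (Fin p → ℝ) → ℝ)
    (g : (Fin n → ℝ) → (Fin p → ℝ) → Fin m → ℝ)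
    (h : (Fin n → ℝ) → (Fin p → ℝ) → Fin q → ℝ)
    (hf : ContDiff ℝ 2 (fun x : (Fin n → ℝ) × (Fin p → ℝ) => f x.1 x.2))
    (hg : ContDiff ℝ 2 (fun x : (Fin n → ℝ) × (Fin p → ℝ) => g x.1 x.2))
    (hh : ContDiff ℝ 2 (fun x : (Fin n → ℝ) × (Fin p → ℝ) => h x.1 x.2))
    (θbar : Fin p → ℝ) (zs : Fin n → ℝ) (lams : Fin m → ℝ) (mus : Fin q → ℝ)
    -- (z*, λ*, μ*) is a KKT point at θ̄:
    (hstat : fderiv ℝ (fun z => f z θbar) zs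
        + ∑ j, lams j • fderiv ℝ (fun z => g z θbar j) zs
        + ∑ i, mus i • fderiv ℝ (fun z => h z θbar i) zs = 0)
    (hfeas_g : g zs θbar = 0)
    (hfeas_h : ∀ i, h zs θbar i ≤ 0)
    (hmu_nonneg : ∀ i, 0 ≤ mus i)
    (hcompl : ∀ i, mus i * h zs θbar i = 0)
    -- strict complementarity:
    (hstrict : ∀ i, h zs θbar i = 0 → 0 < mus i)
    -- LICQ:
    (hLICQ : LinearIndependent ℝ (Sum.elim
        (fun j : Fin m => fderiv ℝ (fun z => g z θbar j) zs)
        (fun i : {i : Fin q // h zs θbar i = 0} =>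
          fderiv ℝ (fun z => h z θbar (i : Fin q)) zs)))
    -- SOSC:
    (hSOSC : ∀ d : Fin n → ℝ, d ≠ 0 →
        (∀ j, fderiv ℝ (fun z => g z θbar j) zs d = 0) →
        (∀ i, h zs θbar i = 0 → fderiv ℝ (fun z => h z θbar i) zs d = 0) →
        0 < fderiv ℝ (fun z => fderiv ℝ (fun w =>
              f w θbar + ∑ j, lams j * g w θbar j + ∑ i, mus i * h w θbar i) z d) zs d)
    -- local NLP KKT-solution maps around θ̄:
    (zsol : (Fin p → ℝ) → (Fin n → ℝ))
    (lsol : (Fin p → ℝ) → (Fin m → ℝ))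
    (msol : (Fin p → ℝ) → (Fin q → ℝ))
    (hzsol : ContDiffAt ℝ 1 zsol θbar) (hlsol : ContDiffAt ℝ 1 lsol θbar)
    (hmsol : ContDiffAt ℝ 1 msol θbar)
    (hzsol0 : zsol θbar = zs) (hlsol0 : lsol θbar = lams) (hmsol0 : msol θbar = mus)
    (hnlp : ∀ᶠ θ in 𝓝 θbar,
      (fderiv ℝ (fun z => f z θ) (zsol θ)
          + ∑ j, lsol θ j • fderiv ℝ (fun z => g z θ j) (zsol θ)
          + ∑ i, msol θ i • fderiv ℝ (fun z => h z θ i) (zsol θ) = 0) ∧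
      g (zsol θ) θ = 0 ∧ (∀ i, h (zsol θ) θ i ≤ 0) ∧
      (∀ i, 0 ≤ msol θ i) ∧ (∀ i, msol θ i * h (zsol θ) θ i = 0))
    -- local KKT-solution maps of the exact-Hessian QP subproblem around θ̄:
    (dzqp : (Fin p → ℝ) → (Fin n → ℝ))
    (lqp : (Fin p → ℝ) → (Fin m → ℝ))
    (mqp : (Fin p → ℝ) → (Fin q → ℝ))
    (hdzqp : ContDiffAt ℝ 1 dzqp θbar) (hlqp : ContDiffAt ℝ 1 lqp θbar)
    (hmqp : ContDiffAt ℝ 1 mqp θbar)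
    (hdzqp0 : dzqp θbar = 0) (hlqp0 : lqp θbar = lams) (hmqp0 : mqp θbar = mus)
    (hqp : ∀ᶠ θ in 𝓝 θbar,
      ((fderiv ℝ (fun z => fderiv ℝ (fun w =>
            f w θbar + ∑ j, lams j * g w θbar j + ∑ i, mus i * h w θbar i) z) zs)
          (dzqp θ)
          + fderiv ℝ (fun z => f z θ) zs
          + ∑ j, lqp θ j • fderiv ℝ (fun z => g z θ j) zs
          + ∑ i, mqp θ i • fderiv ℝ (fun z => h z θ i) zs = 0) ∧
      (∀ j, g zs θ j + fderiv ℝ (fun z => g z θ j) zs (dzqp θ) = 0) ∧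
      (∀ i, h zs θ i + fderiv ℝ (fun z => h z θ i) zs (dzqp θ) ≤ 0) ∧
      (∀ i, 0 ≤ mqp θ i) ∧
      (∀ i, mqp θ i * (h zs θ i + fderiv ℝ (fun z => h z θ i) zs (dzqp θ)) = 0)) :
    zsol θbar = zs + dzqp θbar ∧
    fderiv ℝ zsol θbar = fderiv ℝ dzqp θbar ∧
    fderiv ℝ lsol θbar = fderiv ℝ lqp θbar ∧
    fderiv ℝ msol θbar = fderiv ℝ mqp θbar := by
  classical
  have hgj : ∀ j : Fin m, ContDiff ℝ 2 (fun x : (Fin n → ℝ) × (Fin p → ℝ) => g x.1 x.2 j) := fun j => (contDiff_pi.mp hg) j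
  have hhi : ∀ i : Fin q, ContDiff ℝ 2 (fun x : (Fin n → ℝ) × (Fin p → ℝ) => h x.1 x.2 i) := fun i => (contDiff_pi.mp hh) i
  have hFL : ContDiff ℝ 2 (fun x : (Fin n → ℝ) × (Fin p → ℝ) => f x.1 x.2 + ∑ j, lams j * g x.1 x.2 j + ∑ i, mus i * h x.1 x.2 i) :=
    (hf.add (ContDiff.sum fun j _ => contDiff_const.mul (hgj j))).add
      (ContDiff.sum fun i _ => contDiff_const.mul (hhi i))
  have hfd : Differentiable ℝ (fun x : (Fin n → ℝ) × (Fin p → ℝ) => f x.1 x.2) := hf.differentiable (by norm_num)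
  have hgd : ∀ j, Differentiable ℝ (fun x : (Fin n → ℝ) × (Fin p → ℝ) => g x.1 x.2 j) := fun j => (hgj j).differentiable (by norm_num)
  have hhd : ∀ i, Differentiable ℝ (fun x : (Fin n → ℝ) × (Fin p → ℝ) => h x.1 x.2 i) := fun i => (hhi i).differentiable (by norm_num)
  have hfz : ∀ (θ : Fin p → ℝ) (y : Fin n → ℝ), DifferentiableAt ℝ (fun z => f z θ) y :=
    fun θ y => (hasFDerivAt_partial1 (F := (fun x : (Fin n → ℝ) × (Fin p → ℝ) => f x.1 x.2)) (hfd (y, θ))).differentiableAt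
  have hgz : ∀ (j : Fin m) (θ : Fin p → ℝ) (y : Fin n → ℝ),
      DifferentiableAt ℝ (fun z => g z θ j) y :=
    fun j θ y => (hasFDerivAt_partial1 (F := (fun x : (Fin n → ℝ) × (Fin p → ℝ) => g x.1 x.2 j)) ((hgd j) (y, θ))).differentiableAt
  have hhz : ∀ (i : Fin q) (θ : Fin p → ℝ) (y : Fin n → ℝ),
      DifferentiableAt ℝ (fun z => h z θ i) y :=
    fun i θ y => (hasFDerivAt_partial1 (F := (fun x : (Fin n → ℝ) × (Fin p → ℝ) => h x.1 x.2 i)) ((hhd i) (y, θ))).differentiableAt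
  have hdecomp : ∀ (θ : Fin p → ℝ) (y e : Fin n → ℝ),
      fderiv ℝ (fun z => f z θ + ∑ j, lams j * g z θ j + ∑ i, mus i * h z θ i) y e
        = fderiv ℝ (fun z => f z θ) y e + (∑ j, lams j * fderiv ℝ (fun z => g z θ j) y e)
          + ∑ i, mus i * fderiv ℝ (fun z => h z θ i) y e := by
    intro θ y e
    have h1 : HasFDerivAt (fun z => f z θ + ∑ j, lams j * g z θ j + ∑ i, mus i * h z θ i)
        ((fderiv ℝ (fun z => f z θ) y + ∑ j, lams j • fderiv ℝ (fun z => g z θ j) y)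
          + ∑ i, mus i • fderiv ℝ (fun z => h z θ i) y) y :=
      (((hfz θ y).hasFDerivAt.add (HasFDerivAt.fun_sum fun j _ =>
        ((hgz j θ y).hasFDerivAt.const_mul (lams j)))).add
        (HasFDerivAt.fun_sum fun i _ => ((hhz i θ y).hasFDerivAt.const_mul (mus i))))
    rw [h1.fderiv]
    simp
  have hDz := (hzsol.differentiableAt one_ne_zero).hasFDerivAt
  have hDl := (hlsol.differentiableAt one_ne_zero).hasFDerivAt
  have hDm := (hmsol.differentiableAt one_ne_zero).hasFDerivAt
  have hDdz := (hdzqp.differentiableAt one_ne_zero).hasFDerivAt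
  have hDlq := (hlqp.differentiableAt one_ne_zero).hasFDerivAt
  have hDmq := (hmqp.differentiableAt one_ne_zero).hasFDerivAt
  -- eventual facts
  have evg : ∀ j, ∀ᶠ θ in 𝓝 θbar, g (zsol θ) θ j = 0 := by
    intro j; filter_upwards [hnlp] with θ hθ
    simpa using congrFun hθ.2.1 j
  have evha : ∀ i, h zs θbar i = 0 → ∀ᶠ θ in 𝓝 θbar, h (zsol θ) θ i = 0 := by
    intro i hi
    have hpos : 0 < mus i := hstrict i hi
    have hc : ContinuousAt (fun θ => msol θ i) θbar :=
      ((continuous_apply i).continuousAt).comp (hmsol.continuousAt)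
    have ht : Filter.Tendsto (fun θ => msol θ i) (𝓝 θbar) (𝓝 (mus i)) := by
      rw [← hmsol0]; exact hc
    have hev : ∀ᶠ θ in 𝓝 θbar, 0 < msol θ i := ht (Ioi_mem_nhds hpos)
    filter_upwards [hev, hnlp] with θ h1 h2
    exact ((mul_eq_zero.mp (h2.2.2.2.2 i)).resolve_left (ne_of_gt h1))
  have evha_qp : ∀ i, h zs θbar i = 0 →
      ∀ᶠ θ in 𝓝 θbar, h zs θ i + fderiv ℝ (fun z => h z θ i) zs (dzqp θ) = 0 := by
    intro i hi
    have hpos : 0 < mus i := hstrict i hi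
    have hc : ContinuousAt (fun θ => mqp θ i) θbar :=
      ((continuous_apply i).continuousAt).comp (hmqp.continuousAt)
    have ht : Filter.Tendsto (fun θ => mqp θ i) (𝓝 θbar) (𝓝 (mus i)) := by
      rw [← hmqp0]; exact hc
    have hev : ∀ᶠ θ in 𝓝 θbar, 0 < mqp θ i := ht (Ioi_mem_nhds hpos)
    filter_upwards [hev, hqp] with θ h1 h2
    exact ((mul_eq_zero.mp (h2.2.2.2.2 i)).resolve_left (ne_of_gt h1))
  have evmi : ∀ i, h zs θbar i ≠ 0 → ∀ᶠ θ in 𝓝 θbar, msol θ i = 0 := by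
    intro i hi
    have hlt : h zs θbar i < 0 := lt_of_le_of_ne (hfeas_h i) hi
    have hc : ContinuousAt (fun θ => h (zsol θ) θ i) θbar :=
      ContinuousAt.comp (g := (fun x : (Fin n → ℝ) × (Fin p → ℝ) => h x.1 x.2 i)) (f := fun θ => (zsol θ, θ))
        ((hhd i).continuous.continuousAt) ((hzsol.continuousAt).prodMk continuousAt_id)
    have ht : Filter.Tendsto (fun θ => h (zsol θ) θ i) (𝓝 θbar) (𝓝 (h zs θbar i)) := by
      rw [← hzsol0]; exact hc
    have hev : ∀ᶠ θ in 𝓝 θbar, h (zsol θ) θ i < 0 := ht (Iio_mem_nhds hlt)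
    filter_upwards [hev, hnlp] with θ h1 h2
    exact ((mul_eq_zero.mp (h2.2.2.2.2 i)).resolve_right (ne_of_lt h1))
  have evmi_qp : ∀ i, h zs θbar i ≠ 0 → ∀ᶠ θ in 𝓝 θbar, mqp θ i = 0 := by
    intro i hi
    have hlt : h zs θbar i < 0 := lt_of_le_of_ne (hfeas_h i) hi
    have hpair := hasFDerivAt_fderiv_pairing (F := (fun x : (Fin n → ℝ) × (Fin p → ℝ) => h x.1 x.2 i)) (hhi i) zs hDdz hdzqp0
    have hc2 : ContinuousAt (fun θ => h zs θ i) θbar :=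
      ContinuousAt.comp (g := (fun x : (Fin n → ℝ) × (Fin p → ℝ) => h x.1 x.2 i)) (f := fun θ => ((zs, θ) : _ × _))
        ((hhd i).continuous.continuousAt) ((continuousAt_const).prodMk continuousAt_id)
    have hc : ContinuousAt
        (fun θ => h zs θ i + fderiv ℝ (fun z => h z θ i) zs (dzqp θ)) θbar :=
      hc2.add hpair.differentiableAt.continuousAt
    have hval : h zs θbar i + fderiv ℝ (fun z => h z θbar i) zs (dzqp θbar) < 0 := by
      rw [hdzqp0]; simpa using hlt
    have hev : ∀ᶠ θ in 𝓝 θbar,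
        h zs θ i + fderiv ℝ (fun z => h z θ i) zs (dzqp θ) < 0 := hc (Iio_mem_nhds hval)
    filter_upwards [hev, hqp] with θ h1 h2
    exact ((mul_eq_zero.mp (h2.2.2.2.2 i)).resolve_right (ne_of_lt h1))
  -- partial-derivative translations
  have hpart_g : ∀ (j : Fin m) (w : Fin n → ℝ),
      fderiv ℝ (fun z => g z θbar j) zs w = fderiv ℝ (fun x : (Fin n → ℝ) × (Fin p → ℝ) => g x.1 x.2 j) (zs, θbar) (w, 0) :=
    fun j w => fderiv_partial1 (F := (fun x : (Fin n → ℝ) × (Fin p → ℝ) => g x.1 x.2 j)) ((hgd j) _) w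
  have hpart_h : ∀ (i : Fin q) (w : Fin n → ℝ),
      fderiv ℝ (fun z => h z θbar i) zs w = fderiv ℝ (fun x : (Fin n → ℝ) × (Fin p → ℝ) => h x.1 x.2 i) (zs, θbar) (w, 0) :=
    fun i w => fderiv_partial1 (F := (fun x : (Fin n → ℝ) × (Fin p → ℝ) => h x.1 x.2 i)) ((hhd i) _) w
  -- linearized constraint identities
  have keylin : ∀ (F : (Fin n → ℝ) × (Fin p → ℝ) → ℝ), ContDiff ℝ 2 F →
      (∀ᶠ θ in 𝓝 θbar, F (zsol θ, θ) = 0) →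
      (∀ᶠ θ in 𝓝 θbar, F (zs, θ) + fderiv ℝ (fun z => F (z, θ)) zs (dzqp θ) = 0) →
      ∀ v, fderiv ℝ F (zs, θbar)
          (fderiv ℝ zsol θbar v - fderiv ℝ dzqp θbar v, 0) = 0 := by
    intro F hF hN hQ v
    have hFd : Differentiable ℝ F := hF.differentiable (by norm_num)
    have hDN : HasFDerivAt (fun θ => F (zsol θ, θ))
        ((fderiv ℝ F (zs, θbar)).comp
          ((fderiv ℝ zsol θbar).prod (ContinuousLinearMap.id ℝ (Fin p → ℝ)))) θbar := by
      have h1 := HasFDerivAt.comp (f := fun θ => (zsol θ, θ)) θbar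
        ((hFd (zsol θbar, θbar)).hasFDerivAt) (hDz.prodMk (hasFDerivAt_id θbar))
      rw [hzsol0] at h1
      exact h1
    have hDQ1 : HasFDerivAt (fun θ => F (zs, θ))
        ((fderiv ℝ F (zs, θbar)).comp
          ((0 : (Fin p → ℝ) →L[ℝ] (Fin n → ℝ)).prod (ContinuousLinearMap.id ℝ (Fin p → ℝ)))) θbar :=
      HasFDerivAt.comp (f := fun θ => ((zs, θ) : _ × _)) θbar ((hFd (zs, θbar)).hasFDerivAt)
        ((hasFDerivAt_const zs θbar).prodMk (hasFDerivAt_id θbar))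
    have hDQ2 := hasFDerivAt_fderiv_pairing (F := F) hF zs hDdz hdzqp0
    have hNz := fderiv_zero_of_eventually_zero hDN hN
    have hQz := fderiv_zero_of_eventually_zero (hDQ1.add hDQ2) hQ
    have e1 : fderiv ℝ F (zs, θbar) (fderiv ℝ zsol θbar v, v) = 0 := by
      have := DFunLike.congr_fun hNz v
      simpa using this
    have e2 : fderiv ℝ F (zs, θbar) ((0 : Fin n → ℝ), v)
        + fderiv ℝ F (zs, θbar) (fderiv ℝ dzqp θbar v, 0) = 0 := by
      have := DFunLike.congr_fun hQz v
      simpa using this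
    have e3 : ((fderiv ℝ zsol θbar v - fderiv ℝ dzqp θbar v, 0) : (Fin n → ℝ) × (Fin p → ℝ))
        = (fderiv ℝ zsol θbar v, v) - ((0 : Fin n → ℝ), v) - (fderiv ℝ dzqp θbar v, 0) := by
      simp [Prod.ext_iff]
    rw [e3, map_sub, map_sub]
    linarith [e1, e2]
  have key2 : ∀ (j : Fin m) (v : Fin p → ℝ),
      fderiv ℝ (fun x : (Fin n → ℝ) × (Fin p → ℝ) => g x.1 x.2 j) (zs, θbar) (fderiv ℝ zsol θbar v - fderiv ℝ dzqp θbar v, 0) = 0 := by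
    intro j v
    refine keylin (fun x : (Fin n → ℝ) × (Fin p → ℝ) => g x.1 x.2 j) (hgj j) ?_ ?_ v
    · exact evg j
    · filter_upwards [hqp] with θ hθ; exact hθ.2.1 j
  have key3a : ∀ (i : Fin q), h zs θbar i = 0 → ∀ v,
      fderiv ℝ (fun x : (Fin n → ℝ) × (Fin p → ℝ) => h x.1 x.2 i) (zs, θbar) (fderiv ℝ zsol θbar v - fderiv ℝ dzqp θbar v, 0) = 0 := by
    intro i hi v
    refine keylin (fun x : (Fin n → ℝ) × (Fin p → ℝ) => h x.1 x.2 i) (hhi i) ?_ ?_ v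
    · exact evha i hi
    · exact evha_qp i hi
  have key3b : ∀ (i : Fin q), h zs θbar i ≠ 0 → ∀ v,
      fderiv ℝ msol θbar v i = 0 ∧ fderiv ℝ mqp θbar v i = 0 := by
    intro i hi v
    constructor
    · have hD : HasFDerivAt (fun θ => msol θ i)
          ((ContinuousLinearMap.proj (R := ℝ) (φ := fun _ : Fin q => ℝ) i).comp
            (fderiv ℝ msol θbar)) θbar :=
        (ContinuousLinearMap.proj (R := ℝ) (φ := fun _ : Fin q => ℝ) i).hasFDerivAt.comp θbar hDm
      have hz := fderiv_zero_of_eventually_zero hD (evmi i hi)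
      simpa using DFunLike.congr_fun hz v
    · have hD : HasFDerivAt (fun θ => mqp θ i)
          ((ContinuousLinearMap.proj (R := ℝ) (φ := fun _ : Fin q => ℝ) i).comp
            (fderiv ℝ mqp θbar)) θbar :=
        (ContinuousLinearMap.proj (R := ℝ) (φ := fun _ : Fin q => ℝ) i).hasFDerivAt.comp θbar hDmq
      have hz := fderiv_zero_of_eventually_zero hD (evmi_qp i hi)
      simpa using DFunLike.congr_fun hz v
  -- NLP stationarity differentiated
  have keyN : ∀ (e : Fin n → ℝ) (v : Fin p → ℝ),
      fderiv ℝ (fderiv ℝ (fun x : (Fin n → ℝ) × (Fin p → ℝ) => f x.1 x.2 + ∑ j, lams j * g x.1 x.2 j + ∑ i, mus i * h x.1 x.2 i)) (zs, θbar) (fderiv ℝ zsol θbar v, v) (e, 0)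
        + (∑ j, fderiv ℝ (fun z => g z θbar j) zs e * fderiv ℝ lsol θbar v j)
        + (∑ i, fderiv ℝ (fun z => h z θbar i) zs e * fderiv ℝ msol θbar v i) = 0 := by
    intro e v
    have hT1 : HasFDerivAt (fun θ =>
        fderiv ℝ (fun z => f z θ + ∑ j, lams j * g z θ j + ∑ i, mus i * h z θ i) (zsol θ) e)
        (((fderiv ℝ (fderiv ℝ (fun x : (Fin n → ℝ) × (Fin p → ℝ) => f x.1 x.2 + ∑ j, lams j * g x.1 x.2 j + ∑ i, mus i * h x.1 x.2 i)) (zs, θbar)).flip (e, 0)).comp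
          ((fderiv ℝ zsol θbar).prod (ContinuousLinearMap.id ℝ (Fin p → ℝ)))) θbar := by
      have h1 := hasFDerivAt_fderiv_partial (F := (fun x : (Fin n → ℝ) × (Fin p → ℝ) => f x.1 x.2 + ∑ j, lams j * g x.1 x.2 j + ∑ i, mus i * h x.1 x.2 i)) hFL hDz e
      rw [hzsol0] at h1
      exact h1
    have hT2 : ∀ j : Fin m, HasFDerivAt
        (fun θ => (lsol θ j - lams j) * fderiv ℝ (fun z => g z θ j) (zsol θ) e)
        ((lsol θbar j - lams j) •
            (((fderiv ℝ (fderiv ℝ (fun x : (Fin n → ℝ) × (Fin p → ℝ) => g x.1 x.2 j)) (zs, θbar)).flip (e, 0)).comp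
              ((fderiv ℝ zsol θbar).prod (ContinuousLinearMap.id ℝ (Fin p → ℝ))))
          + (fderiv ℝ (fun z => g z θbar j) zs e) •
              ((ContinuousLinearMap.proj (R := ℝ) (φ := fun _ : Fin m => ℝ) j).comp
                (fderiv ℝ lsol θbar))) θbar := by
      intro j
      have hu : HasFDerivAt (fun θ => lsol θ j - lams j)
          ((ContinuousLinearMap.proj (R := ℝ) (φ := fun _ : Fin m => ℝ) j).comp
            (fderiv ℝ lsol θbar)) θbar :=
        ((ContinuousLinearMap.proj (R := ℝ) (φ := fun _ : Fin m => ℝ) j).hasFDerivAt.comp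
          θbar hDl).sub_const (lams j)
      have hw := hasFDerivAt_fderiv_partial (F := (fun x : (Fin n → ℝ) × (Fin p → ℝ) => g x.1 x.2 j)) (hgj j) hDz e
      rw [hzsol0] at hw
      have h2 := hu.mul hw
      rw [hzsol0] at h2
      exact h2
    have hT3 : ∀ i : Fin q, HasFDerivAt
        (fun θ => (msol θ i - mus i) * fderiv ℝ (fun z => h z θ i) (zsol θ) e)
        ((msol θbar i - mus i) •
            (((fderiv ℝ (fderiv ℝ (fun x : (Fin n → ℝ) × (Fin p → ℝ) => h x.1 x.2 i)) (zs, θbar)).flip (e, 0)).comp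
              ((fderiv ℝ zsol θbar).prod (ContinuousLinearMap.id ℝ (Fin p → ℝ))))
          + (fderiv ℝ (fun z => h z θbar i) zs e) •
              ((ContinuousLinearMap.proj (R := ℝ) (φ := fun _ : Fin q => ℝ) i).comp
                (fderiv ℝ msol θbar))) θbar := by
      intro i
      have hu : HasFDerivAt (fun θ => msol θ i - mus i)
          ((ContinuousLinearMap.proj (R := ℝ) (φ := fun _ : Fin q => ℝ) i).comp
            (fderiv ℝ msol θbar)) θbar :=
        ((ContinuousLinearMap.proj (R := ℝ) (φ := fun _ : Fin q => ℝ) i).hasFDerivAt.comp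
          θbar hDm).sub_const (mus i)
      have hw := hasFDerivAt_fderiv_partial (F := (fun x : (Fin n → ℝ) × (Fin p → ℝ) => h x.1 x.2 i)) (hhi i) hDz e
      rw [hzsol0] at hw
      have h2 := hu.mul hw
      rw [hzsol0] at h2
      exact h2
    have hT := (hT1.add (HasFDerivAt.fun_sum fun j (_ : j ∈ Finset.univ) => hT2 j)).add
      (HasFDerivAt.fun_sum fun i (_ : i ∈ Finset.univ) => hT3 i)
    have hevN : ∀ᶠ θ in 𝓝 θbar,
        (fderiv ℝ (fun z => f z θ + ∑ j, lams j * g z θ j + ∑ i, mus i * h z θ i) (zsol θ) e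
          + ∑ j, (lsol θ j - lams j) * fderiv ℝ (fun z => g z θ j) (zsol θ) e)
          + ∑ i, (msol θ i - mus i) * fderiv ℝ (fun z => h z θ i) (zsol θ) e = 0 := by
      filter_upwards [hnlp] with θ hθ
      have hst := DFunLike.congr_fun hθ.1 e
      simp only [ContinuousLinearMap.add_apply, ContinuousLinearMap.coe_sum',
        Finset.sum_apply, ContinuousLinearMap.smul_apply, smul_eq_mul,
        ContinuousLinearMap.zero_apply] at hst
      rw [hdecomp θ (zsol θ) e]
      have hg' : ∑ j, (lsol θ j - lams j) * fderiv ℝ (fun z => g z θ j) (zsol θ) e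
          = (∑ j, lsol θ j * fderiv ℝ (fun z => g z θ j) (zsol θ) e)
            - ∑ j, lams j * fderiv ℝ (fun z => g z θ j) (zsol θ) e := by
        rw [← Finset.sum_sub_distrib]; exact Finset.sum_congr rfl fun j _ => by ring
      have hh' : ∑ i, (msol θ i - mus i) * fderiv ℝ (fun z => h z θ i) (zsol θ) e
          = (∑ i, msol θ i * fderiv ℝ (fun z => h z θ i) (zsol θ) e)
            - ∑ i, mus i * fderiv ℝ (fun z => h z θ i) (zsol θ) e := by
        rw [← Finset.sum_sub_distrib]; exact Finset.sum_congr rfl fun i _ => by ring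
      rw [hg', hh']
      linarith [hst]
    have hz := fderiv_zero_of_eventually_zero hT hevN
    have := DFunLike.congr_fun hz v
    simp only [ContinuousLinearMap.add_apply, ContinuousLinearMap.coe_sum',
      Finset.sum_apply, ContinuousLinearMap.smul_apply, smul_eq_mul,
      ContinuousLinearMap.coe_comp', Function.comp_apply,
      ContinuousLinearMap.flip_apply, ContinuousLinearMap.prod_apply,
      ContinuousLinearMap.coe_id', id_eq, ContinuousLinearMap.proj_apply,
      hlsol0, hmsol0, sub_self, zero_mul, zero_add, add_zero,
      ContinuousLinearMap.zero_apply] at this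
    convert this using 2
  -- QP stationarity differentiated
  have keyQ : ∀ (e : Fin n → ℝ) (v : Fin p → ℝ),
      fderiv ℝ (fun z => fderiv ℝ
          (fun w => f w θbar + ∑ j, lams j * g w θbar j + ∑ i, mus i * h w θbar i) z) zs
          (fderiv ℝ dzqp θbar v) e
        + fderiv ℝ (fderiv ℝ (fun x : (Fin n → ℝ) × (Fin p → ℝ) => f x.1 x.2 + ∑ j, lams j * g x.1 x.2 j + ∑ i, mus i * h x.1 x.2 i)) (zs, θbar) ((0 : Fin n → ℝ), v) (e, 0)
        + (∑ j, fderiv ℝ (fun z => g z θbar j) zs e * fderiv ℝ lqp θbar v j)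
        + (∑ i, fderiv ℝ (fun z => h z θbar i) zs e * fderiv ℝ mqp θbar v i) = 0 := by
    intro e v
    have hQ1 : HasFDerivAt (fun θ =>
        (fderiv ℝ (fun z => fderiv ℝ
          (fun w => f w θbar + ∑ j, lams j * g w θbar j + ∑ i, mus i * h w θbar i) z) zs)
          (dzqp θ) e)
        (((fderiv ℝ (fun z => fderiv ℝ
          (fun w => f w θbar + ∑ j, lams j * g w θbar j + ∑ i, mus i * h w θbar i) z) zs).flip
            e).comp (fderiv ℝ dzqp θbar)) θbar := by
      have h1 := ((fderiv ℝ (fun z => fderiv ℝ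
          (fun w => f w θbar + ∑ j, lams j * g w θbar j + ∑ i, mus i * h w θbar i) z) zs).flip
            e).hasFDerivAt.comp θbar hDdz
      exact h1.congr_of_eventuallyEq (Filter.Eventually.of_forall fun θ =>
        (ContinuousLinearMap.flip_apply _ _ _).symm)
    have hQ2 : HasFDerivAt (fun θ =>
        fderiv ℝ (fun z => f z θ + ∑ j, lams j * g z θ j + ∑ i, mus i * h z θ i) zs e)
        (((fderiv ℝ (fderiv ℝ (fun x : (Fin n → ℝ) × (Fin p → ℝ) => f x.1 x.2 + ∑ j, lams j * g x.1 x.2 j + ∑ i, mus i * h x.1 x.2 i)) (zs, θbar)).flip (e, 0)).comp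
          ((0 : (Fin p → ℝ) →L[ℝ] (Fin n → ℝ)).prod (ContinuousLinearMap.id ℝ (Fin p → ℝ)))) θbar :=
      hasFDerivAt_fderiv_partial (F := (fun x : (Fin n → ℝ) × (Fin p → ℝ) => f x.1 x.2 + ∑ j, lams j * g x.1 x.2 j + ∑ i, mus i * h x.1 x.2 i)) hFL (hasFDerivAt_const zs θbar) e
    have hQ3 : ∀ j : Fin m, HasFDerivAt
        (fun θ => (lqp θ j - lams j) * fderiv ℝ (fun z => g z θ j) zs e)
        ((lqp θbar j - lams j) •
            (((fderiv ℝ (fderiv ℝ (fun x : (Fin n → ℝ) × (Fin p → ℝ) => g x.1 x.2 j)) (zs, θbar)).flip (e, 0)).comp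
              ((0 : (Fin p → ℝ) →L[ℝ] (Fin n → ℝ)).prod (ContinuousLinearMap.id ℝ (Fin p → ℝ))))
          + (fderiv ℝ (fun z => g z θbar j) zs e) •
              ((ContinuousLinearMap.proj (R := ℝ) (φ := fun _ : Fin m => ℝ) j).comp
                (fderiv ℝ lqp θbar))) θbar := by
      intro j
      have hu : HasFDerivAt (fun θ => lqp θ j - lams j)
          ((ContinuousLinearMap.proj (R := ℝ) (φ := fun _ : Fin m => ℝ) j).comp
            (fderiv ℝ lqp θbar)) θbar :=
        ((ContinuousLinearMap.proj (R := ℝ) (φ := fun _ : Fin m => ℝ) j).hasFDerivAt.comp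
          θbar hDlq).sub_const (lams j)
      have hw : HasFDerivAt (fun θ => fderiv ℝ (fun z => g z θ j) zs e)
          (((fderiv ℝ (fderiv ℝ (fun x : (Fin n → ℝ) × (Fin p → ℝ) => g x.1 x.2 j)) (zs, θbar)).flip (e, 0)).comp
            ((0 : (Fin p → ℝ) →L[ℝ] (Fin n → ℝ)).prod (ContinuousLinearMap.id ℝ (Fin p → ℝ)))) θbar :=
        hasFDerivAt_fderiv_partial (F := (fun x : (Fin n → ℝ) × (Fin p → ℝ) => g x.1 x.2 j)) (hgj j) (hasFDerivAt_const zs θbar) e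
      exact hu.mul hw
    have hQ4 : ∀ i : Fin q, HasFDerivAt
        (fun θ => (mqp θ i - mus i) * fderiv ℝ (fun z => h z θ i) zs e)
        ((mqp θbar i - mus i) •
            (((fderiv ℝ (fderiv ℝ (fun x : (Fin n → ℝ) × (Fin p → ℝ) => h x.1 x.2 i)) (zs, θbar)).flip (e, 0)).comp
              ((0 : (Fin p → ℝ) →L[ℝ] (Fin n → ℝ)).prod (ContinuousLinearMap.id ℝ (Fin p → ℝ))))
          + (fderiv ℝ (fun z => h z θbar i) zs e) •
              ((ContinuousLinearMap.proj (R := ℝ) (φ := fun _ : Fin q => ℝ) i).comp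
                (fderiv ℝ mqp θbar))) θbar := by
      intro i
      have hu : HasFDerivAt (fun θ => mqp θ i - mus i)
          ((ContinuousLinearMap.proj (R := ℝ) (φ := fun _ : Fin q => ℝ) i).comp
            (fderiv ℝ mqp θbar)) θbar :=
        ((ContinuousLinearMap.proj (R := ℝ) (φ := fun _ : Fin q => ℝ) i).hasFDerivAt.comp
          θbar hDmq).sub_const (mus i)
      have hw : HasFDerivAt (fun θ => fderiv ℝ (fun z => h z θ i) zs e)
          (((fderiv ℝ (fderiv ℝ (fun x : (Fin n → ℝ) × (Fin p → ℝ) => h x.1 x.2 i)) (zs, θbar)).flip (e, 0)).comp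
            ((0 : (Fin p → ℝ) →L[ℝ] (Fin n → ℝ)).prod (ContinuousLinearMap.id ℝ (Fin p → ℝ)))) θbar :=
        hasFDerivAt_fderiv_partial (F := (fun x : (Fin n → ℝ) × (Fin p → ℝ) => h x.1 x.2 i)) (hhi i) (hasFDerivAt_const zs θbar) e
      exact hu.mul hw
    have hT := ((hQ1.add hQ2).add (HasFDerivAt.fun_sum fun j (_ : j ∈ Finset.univ) => hQ3 j)).add
      (HasFDerivAt.fun_sum fun i (_ : i ∈ Finset.univ) => hQ4 i)
    have hevQ : ∀ᶠ θ in 𝓝 θbar,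
        (((fderiv ℝ (fun z => fderiv ℝ
            (fun w => f w θbar + ∑ j, lams j * g w θbar j + ∑ i, mus i * h w θbar i) z) zs)
            (dzqp θ) e
          + fderiv ℝ (fun z => f z θ + ∑ j, lams j * g z θ j + ∑ i, mus i * h z θ i) zs e)
          + ∑ j, (lqp θ j - lams j) * fderiv ℝ (fun z => g z θ j) zs e)
          + ∑ i, (mqp θ i - mus i) * fderiv ℝ (fun z => h z θ i) zs e = 0 := by
      filter_upwards [hqp] with θ hθ
      have hst := DFunLike.congr_fun hθ.1 e
      simp only [ContinuousLinearMap.add_apply, ContinuousLinearMap.coe_sum',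
        Finset.sum_apply, ContinuousLinearMap.smul_apply, smul_eq_mul,
        ContinuousLinearMap.zero_apply] at hst
      rw [hdecomp θ zs e]
      have hg' : ∑ j, (lqp θ j - lams j) * fderiv ℝ (fun z => g z θ j) zs e
          = (∑ j, lqp θ j * fderiv ℝ (fun z => g z θ j) zs e)
            - ∑ j, lams j * fderiv ℝ (fun z => g z θ j) zs e := by
        rw [← Finset.sum_sub_distrib]; exact Finset.sum_congr rfl fun j _ => by ring
      have hh' : ∑ i, (mqp θ i - mus i) * fderiv ℝ (fun z => h z θ i) zs e
          = (∑ i, mqp θ i * fderiv ℝ (fun z => h z θ i) zs e)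
            - ∑ i, mus i * fderiv ℝ (fun z => h z θ i) zs e := by
        rw [← Finset.sum_sub_distrib]; exact Finset.sum_congr rfl fun i _ => by ring
      rw [hg', hh']
      linarith [hst]
    have hz := fderiv_zero_of_eventually_zero hT hevQ
    have := DFunLike.congr_fun hz v
    simp only [ContinuousLinearMap.add_apply, ContinuousLinearMap.coe_sum',
      Finset.sum_apply, ContinuousLinearMap.smul_apply, smul_eq_mul,
      ContinuousLinearMap.coe_comp', Function.comp_apply,
      ContinuousLinearMap.flip_apply, ContinuousLinearMap.prod_apply,
      ContinuousLinearMap.coe_id', id_eq, ContinuousLinearMap.proj_apply,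
      hlqp0, hmqp0, sub_self, zero_mul, zero_add, add_zero,
      ContinuousLinearMap.zero_apply] at this
    convert this using 2
  -- combined linear identity
  have key1 : ∀ (e : Fin n → ℝ) (v : Fin p → ℝ),
      fderiv ℝ (fderiv ℝ (fun x : (Fin n → ℝ) × (Fin p → ℝ) => f x.1 x.2 + ∑ j, lams j * g x.1 x.2 j + ∑ i, mus i * h x.1 x.2 i)) (zs, θbar)
          (fderiv ℝ zsol θbar v - fderiv ℝ dzqp θbar v, 0) (e, 0)
        + (∑ j, fderiv ℝ (fun z => g z θbar j) zs e *
            (fderiv ℝ lsol θbar v j - fderiv ℝ lqp θbar v j))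
        + (∑ i, fderiv ℝ (fun z => h z θbar i) zs e *
            (fderiv ℝ msol θbar v i - fderiv ℝ mqp θbar v i)) = 0 := by
    intro e v
    have hN := keyN e v
    have hQ := keyQ e v
    have hM : fderiv ℝ (fun z => fderiv ℝ
          (fun w => f w θbar + ∑ j, lams j * g w θbar j + ∑ i, mus i * h w θbar i) z) zs
          (fderiv ℝ dzqp θbar v) e
        = fderiv ℝ (fderiv ℝ (fun x : (Fin n → ℝ) × (Fin p → ℝ) => f x.1 x.2 + ∑ j, lams j * g x.1 x.2 j + ∑ i, mus i * h x.1 x.2 i)) (zs, θbar) (fderiv ℝ dzqp θbar v, 0) (e, 0) :=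
      second_partial_eq (F := (fun x : (Fin n → ℝ) × (Fin p → ℝ) => f x.1 x.2 + ∑ j, lams j * g x.1 x.2 j + ∑ i, mus i * h x.1 x.2 i)) hFL zs θbar _ e
    have hsplitarg : ((fderiv ℝ zsol θbar v, v) : (Fin n → ℝ) × (Fin p → ℝ))
        = (fderiv ℝ zsol θbar v - fderiv ℝ dzqp θbar v, 0) + (fderiv ℝ dzqp θbar v, 0)
          + ((0 : Fin n → ℝ), v) := by
      simp [Prod.ext_iff]
    rw [hsplitarg, map_add, map_add, ContinuousLinearMap.add_apply,
      ContinuousLinearMap.add_apply] at hN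
    have hgs : ∑ j, fderiv ℝ (fun z => g z θbar j) zs e *
          (fderiv ℝ lsol θbar v j - fderiv ℝ lqp θbar v j)
        = (∑ j, fderiv ℝ (fun z => g z θbar j) zs e * fderiv ℝ lsol θbar v j)
          - ∑ j, fderiv ℝ (fun z => g z θbar j) zs e * fderiv ℝ lqp θbar v j := by
      rw [← Finset.sum_sub_distrib]; exact Finset.sum_congr rfl fun j _ => by ring
    have hhs : ∑ i, fderiv ℝ (fun z => h z θbar i) zs e *
          (fderiv ℝ msol θbar v i - fderiv ℝ mqp θbar v i)
        = (∑ i, fderiv ℝ (fun z => h z θbar i) zs e * fderiv ℝ msol θbar v i)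
          - ∑ i, fderiv ℝ (fun z => h z θbar i) zs e * fderiv ℝ mqp θbar v i := by
      rw [← Finset.sum_sub_distrib]; exact Finset.sum_congr rfl fun i _ => by ring
    rw [hgs, hhs]
    linarith [hN, hQ, hM]
  -- the main pointwise statement
  have main : ∀ v : Fin p → ℝ,
      fderiv ℝ zsol θbar v = fderiv ℝ dzqp θbar v
      ∧ fderiv ℝ lsol θbar v = fderiv ℝ lqp θbar v
      ∧ fderiv ℝ msol θbar v = fderiv ℝ mqp θbar v := by
    intro v
    have hg0 : ∀ j, fderiv ℝ (fun z => g z θbar j) zs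
        (fderiv ℝ zsol θbar v - fderiv ℝ dzqp θbar v) = 0 := by
      intro j; rw [hpart_g j _]; exact key2 j v
    have hh0 : ∀ i, h zs θbar i = 0 → fderiv ℝ (fun z => h z θbar i) zs
        (fderiv ℝ zsol θbar v - fderiv ℝ dzqp θbar v) = 0 := by
      intro i hi; rw [hpart_h i _]; exact key3a i hi v
    have hS0 : fderiv ℝ (fderiv ℝ (fun x : (Fin n → ℝ) × (Fin p → ℝ) => f x.1 x.2 + ∑ j, lams j * g x.1 x.2 j + ∑ i, mus i * h x.1 x.2 i)) (zs, θbar)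
        (fderiv ℝ zsol θbar v - fderiv ℝ dzqp θbar v, 0)
        (fderiv ℝ zsol θbar v - fderiv ℝ dzqp θbar v, 0) = 0 := by
      have h1 := key1 (fderiv ℝ zsol θbar v - fderiv ℝ dzqp θbar v) v
      have h2 : ∑ j, fderiv ℝ (fun z => g z θbar j) zs
            (fderiv ℝ zsol θbar v - fderiv ℝ dzqp θbar v) *
            (fderiv ℝ lsol θbar v j - fderiv ℝ lqp θbar v j) = 0 :=
        Finset.sum_eq_zero fun j _ => by rw [hg0 j]; ring
      have h3 : ∑ i, fderiv ℝ (fun z => h z θbar i) zs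
            (fderiv ℝ zsol θbar v - fderiv ℝ dzqp θbar v) *
            (fderiv ℝ msol θbar v i - fderiv ℝ mqp θbar v i) = 0 :=
        Finset.sum_eq_zero fun i _ => by
          by_cases hi : h zs θbar i = 0
          · rw [hh0 i hi]; ring
          · have hk := key3b i hi v
            rw [hk.1, hk.2]; ring
      linarith [h1, h2, h3]
    have hd0 : fderiv ℝ zsol θbar v - fderiv ℝ dzqp θbar v = 0 := by
      by_contra hne
      have hpos := hSOSC _ hne hg0 hh0
      have hlink : fderiv ℝ (fun z => fderiv ℝ
            (fun w => f w θbar + ∑ j, lams j * g w θbar j + ∑ i, mus i * h w θbar i) z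
            (fderiv ℝ zsol θbar v - fderiv ℝ dzqp θbar v)) zs
            (fderiv ℝ zsol θbar v - fderiv ℝ dzqp θbar v)
          = fderiv ℝ (fderiv ℝ (fun x : (Fin n → ℝ) × (Fin p → ℝ) => f x.1 x.2 + ∑ j, lams j * g x.1 x.2 j + ∑ i, mus i * h x.1 x.2 i)) (zs, θbar)
            (fderiv ℝ zsol θbar v - fderiv ℝ dzqp θbar v, 0)
            (fderiv ℝ zsol θbar v - fderiv ℝ dzqp θbar v, 0) :=
        sosc_link (F := (fun x : (Fin n → ℝ) × (Fin p → ℝ) => f x.1 x.2 + ∑ j, lams j * g x.1 x.2 j + ∑ i, mus i * h x.1 x.2 i)) hFL zs θbar _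
      rw [hlink, hS0] at hpos
      exact lt_irrefl 0 hpos
    have hzero : ∀ e : Fin n → ℝ,
        (∑ j, fderiv ℝ (fun z => g z θbar j) zs e *
          (fderiv ℝ lsol θbar v j - fderiv ℝ lqp θbar v j))
        + (∑ i, fderiv ℝ (fun z => h z θbar i) zs e *
          (fderiv ℝ msol θbar v i - fderiv ℝ mqp θbar v i)) = 0 := by
      intro e
      have h1 := key1 e v
      rw [hd0] at h1
      have : fderiv ℝ (fderiv ℝ (fun x : (Fin n → ℝ) × (Fin p → ℝ) => f x.1 x.2 + ∑ j, lams j * g x.1 x.2 j + ∑ i, mus i * h x.1 x.2 i)) (zs, θbar)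
          ((0 : Fin n → ℝ), (0 : Fin p → ℝ)) (e, 0) = 0 := by
        have : (((0 : Fin n → ℝ), (0 : Fin p → ℝ)) : (Fin n → ℝ) × (Fin p → ℝ)) = 0 := rfl
        rw [this, map_zero]
        rfl
      rw [this] at h1
      linarith [h1]
    -- LICQ step
    have hsubsum : ∀ e : Fin n → ℝ,
        ∑ i : {i : Fin q // h zs θbar i = 0},
          (fderiv ℝ msol θbar v i.1 - fderiv ℝ mqp θbar v i.1) *
            fderiv ℝ (fun z => h z θbar (i : Fin q)) zs e
        = ∑ i : Fin q, fderiv ℝ (fun z => h z θbar i) zs e *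
            (fderiv ℝ msol θbar v i - fderiv ℝ mqp θbar v i) := by
      intro e
      rw [← Finset.sum_subtype (Finset.univ.filter fun i : Fin q => h zs θbar i = 0)
        (fun i => by simp) (fun i => (fderiv ℝ msol θbar v i - fderiv ℝ mqp θbar v i) *
          fderiv ℝ (fun z => h z θbar i) zs e)]
      rw [← Finset.sum_filter_add_sum_filter_not Finset.univ
        (fun i : Fin q => h zs θbar i = 0)
        (fun i => fderiv ℝ (fun z => h z θbar i) zs e *
          (fderiv ℝ msol θbar v i - fderiv ℝ mqp θbar v i))]
      have hnot : ∑ i ∈ Finset.univ.filter (fun i : Fin q => ¬ h zs θbar i = 0),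
          fderiv ℝ (fun z => h z θbar i) zs e *
            (fderiv ℝ msol θbar v i - fderiv ℝ mqp θbar v i) = 0 :=
        Finset.sum_eq_zero fun i hi => by
          have hk := key3b i (Finset.mem_filter.mp hi).2 v
          rw [hk.1, hk.2]; ring
      rw [hnot, add_zero]
      exact Finset.sum_congr rfl fun i _ => by ring
    have hsum0 : ∑ s : Fin m ⊕ {i : Fin q // h zs θbar i = 0},
        (Sum.elim (fun j => fderiv ℝ lsol θbar v j - fderiv ℝ lqp θbar v j)
          (fun i : {i : Fin q // h zs θbar i = 0} =>
            fderiv ℝ msol θbar v i.1 - fderiv ℝ mqp θbar v i.1) s) •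
        (Sum.elim (fun j : Fin m => fderiv ℝ (fun z => g z θbar j) zs)
          (fun i : {i : Fin q // h zs θbar i = 0} =>
            fderiv ℝ (fun z => h z θbar (i : Fin q)) zs) s) = 0 := by
      rw [Fintype.sum_sum_type]
      apply ContinuousLinearMap.ext
      intro e
      simp only [ContinuousLinearMap.add_apply, ContinuousLinearMap.coe_sum',
        Finset.sum_apply, ContinuousLinearMap.smul_apply, smul_eq_mul,
        Sum.elim_inl, Sum.elim_inr, ContinuousLinearMap.zero_apply]
      have h1 := hzero e
      rw [← hsubsum e] at h1
      have h2 : ∑ j, (fderiv ℝ lsol θbar v j - fderiv ℝ lqp θbar v j) *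
            fderiv ℝ (fun z => g z θbar j) zs e
          = ∑ j, fderiv ℝ (fun z => g z θbar j) zs e *
            (fderiv ℝ lsol θbar v j - fderiv ℝ lqp θbar v j) :=
        Finset.sum_congr rfl fun j _ => by ring
      rw [h2]
      exact h1
    have hall := Fintype.linearIndependent_iff.mp hLICQ _ hsum0
    refine ⟨sub_eq_zero.mp hd0, ?_, ?_⟩
    · funext j
      exact sub_eq_zero.mp (hall (Sum.inl j))
    · funext i
      by_cases hi : h zs θbar i = 0
      · exact sub_eq_zero.mp (hall (Sum.inr ⟨i, hi⟩))
      · have hk := key3b i hi v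
        rw [hk.1, hk.2]
  refine ⟨by rw [hzsol0, hdzqp0, add_zero], ?_, ?_, ?_⟩
  · exact ContinuousLinearMap.ext fun v => (main v).1
  · exact ContinuousLinearMap.ext fun v => (main v).2.1
  · exact ContinuousLinearMap.ext fun v => (main v).2.2
end

section
/- Consider the parametric NLP min_{z∈ℝⁿ} f(z;θ) s.t. g(z;θ)=0, h(z;θ)≤0 and suppose (z*,λ*,μ*) is a KKT point at θ̄ satisfying LICQ, SOSC and strict complementarity. Then there exist τ̄ > 0, a constant C > 0, and a continuously differentiable map τ ↦ (z(τ),λ(τ),μ(τ)) on (0, τ̄) such that for each τ ∈ (0, τ̄) the triple (z(τ),λ(τ),μ(τ)) satisfies the smoothed KKT system at θ̄: ∇_z f(z;θ̄) + ∇_z g(z;θ̄)λ + ∇_z h(z;θ̄)μ = 0, g(z;θ̄)=0, hᵢ(z;θ̄) < 0 and μᵢ > 0 with −μᵢ hᵢ(z;θ̄) = τ for all i; moreover lim_{τ→0⁺}(z(τ),λ(τ),μ(τ)) = (z*,λ*,μ*) and ‖z(τ) − z*‖ ≤ Cτ for all τ ∈ (0,τ̄). -/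
open Filter Topology ContinuousLinearMap

noncomputable section CPaux

variable {n m q : ℕ}

/-- The combined primal-dual space. -/
abbrev EE (n m q : ℕ) := (Fin n → ℝ) × (Fin m → ℝ) × (Fin q → ℝ)

variable (f1 : (Fin n → ℝ) → ℝ) (g1 : (Fin n → ℝ) → Fin m → ℝ)
  (h1 : (Fin n → ℝ) → Fin q → ℝ)

/-- Stationarity residual (gradient of the Lagrangian in coordinates). -/
def Sfun (x : EE n m q) : Fin n → ℝ := fun i =>
  fderiv ℝ f1 x.1 (Pi.single i 1)
    + ∑ j, x.2.1 j * fderiv ℝ (fun z => g1 z j) x.1 (Pi.single i 1)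
    + ∑ k, x.2.2 k * fderiv ℝ (fun z => h1 z k) x.1 (Pi.single i 1)

/-- The smoothed KKT map, with the barrier parameter as extra variable. -/
def Phi (p : ℝ × EE n m q) : ℝ × EE n m q :=
  (p.1, (Sfun f1 g1 h1 p.2, g1 p.2.1, fun k => p.2.2.2 k * h1 p.2.1 k + p.1))

lemma contDiff_Phi (hf : ContDiff ℝ 2 f1) (hg : ContDiff ℝ 2 g1) (hh : ContDiff ℝ 2 h1) :
    ContDiff ℝ 1 (Phi f1 g1 h1) := by
  have hfd : ContDiff ℝ 1 (fun p : ℝ × EE n m q => fderiv ℝ f1 p.2.1) := by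
    exact ContDiff.fderiv (f := fun _ w => f1 w) (g := fun p : ℝ × EE n m q => p.2.1)
      (hf.comp contDiff_snd) (contDiff_fst.comp contDiff_snd) (by norm_num)
  have hgd : ∀ j, ContDiff ℝ 1 (fun p : ℝ × EE n m q => fderiv ℝ (fun z => g1 z j) p.2.1) := by
    intro j
    exact ContDiff.fderiv (f := fun _ w => g1 w j) (g := fun p : ℝ × EE n m q => p.2.1)
      ((contDiff_pi.1 hg j).comp contDiff_snd) (contDiff_fst.comp contDiff_snd) (by norm_num)
  have hhd : ∀ k, ContDiff ℝ 1 (fun p : ℝ × EE n m q => fderiv ℝ (fun z => h1 z k) p.2.1) := by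
    intro k
    exact ContDiff.fderiv (f := fun _ w => h1 w k) (g := fun p : ℝ × EE n m q => p.2.1)
      ((contDiff_pi.1 hh k).comp contDiff_snd) (contDiff_fst.comp contDiff_snd) (by norm_num)
  unfold Phi Sfun
  refine contDiff_fst.prodMk (ContDiff.prodMk ?_ (ContDiff.prodMk ?_ ?_))
  · refine contDiff_pi.2 fun i => ?_
    refine ContDiff.add (ContDiff.add ?_ ?_) ?_
    · exact hfd.clm_apply contDiff_const
    · refine ContDiff.sum fun j _ => ContDiff.mul ?_ ((hgd j).clm_apply contDiff_const)
      exact (contDiff_apply ℝ ℝ j).comp (contDiff_fst.comp (contDiff_snd.comp contDiff_snd))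
    · refine ContDiff.sum fun k _ => ContDiff.mul ?_ ((hhd k).clm_apply contDiff_const)
      exact (contDiff_apply ℝ ℝ k).comp (contDiff_snd.comp (contDiff_snd.comp contDiff_snd))
  · exact ((hg.of_le (by norm_num)).comp (contDiff_fst.comp contDiff_snd))
  · refine contDiff_pi.2 fun k => ?_
    refine ContDiff.add (ContDiff.mul ?_ ?_) contDiff_fst
    · exact (contDiff_apply ℝ ℝ k).comp (contDiff_snd.comp (contDiff_snd.comp contDiff_snd))
    · exact ((contDiff_pi.1 hh k).of_le (by norm_num)).comp (contDiff_fst.comp contDiff_snd)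

/-- A functional on `Fin n → ℝ` vanishing on the standard basis vanishes. -/
lemma clm_eq_zero_of_basis (L : (Fin n → ℝ) →L[ℝ] ℝ)
    (hL : ∀ i, L (Pi.single i 1) = 0) : L = 0 := by
  ext v
  have hv : v = ∑ i, Pi.single i (v i) := by
    simp [Finset.univ_sum_single]
  rw [hv, map_sum]
  simp only [ContinuousLinearMap.zero_apply]
  refine Finset.sum_eq_zero fun i _ => ?_
  have : Pi.single i (v i) = v i • (Pi.single i (1:ℝ) : Fin n → ℝ) := by
    funext t
    by_cases htv : t = i <;> simp [Pi.single_apply, htv]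
  rw [this, map_smul, hL i, smul_zero]



set_option maxHeartbeats 0 in
theorem aux
    (hf : ContDiff ℝ 2 f1) (hg : ContDiff ℝ 2 g1) (hh : ContDiff ℝ 2 h1)
    (zs : Fin n → ℝ) (lams : Fin m → ℝ) (mus : Fin q → ℝ)
    (hstat : fderiv ℝ f1 zs
        + ∑ j, lams j • fderiv ℝ (fun z => g1 z j) zs
        + ∑ i, mus i • fderiv ℝ (fun z => h1 z i) zs = 0)
    (hfeas_g : g1 zs = 0)
    (hfeas_h : ∀ i, h1 zs i ≤ 0)
    (hcompl : ∀ i, mus i * h1 zs i = 0)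
    (hstrict : ∀ i, h1 zs i = 0 → 0 < mus i)
    (hLICQ : LinearIndependent ℝ (Sum.elim
        (fun j : Fin m => fderiv ℝ (fun z => g1 z j) zs)
        (fun i : {i : Fin q // h1 zs i = 0} =>
          fderiv ℝ (fun z => h1 z (i : Fin q)) zs)))
    (hSOSC : ∀ d : Fin n → ℝ, d ≠ 0 →
        (∀ j, fderiv ℝ (fun z => g1 z j) zs d = 0) →
        (∀ i, h1 zs i = 0 → fderiv ℝ (fun z => h1 z i) zs d = 0) →
        0 < fderiv ℝ (fun z => fderiv ℝ (fun w =>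
              f1 w + ∑ j, lams j * g1 w j + ∑ i, mus i * h1 w i) z d) zs d) :
    ∃ τbar C : ℝ, 0 < τbar ∧ 0 < C ∧
      ∃ (zc : ℝ → (Fin n → ℝ)) (lc : ℝ → (Fin m → ℝ)) (mc : ℝ → (Fin q → ℝ)),
        ContDiffOn ℝ 1 zc (Set.Ioo 0 τbar) ∧
        ContDiffOn ℝ 1 lc (Set.Ioo 0 τbar) ∧
        ContDiffOn ℝ 1 mc (Set.Ioo 0 τbar) ∧
        (∀ τ ∈ Set.Ioo (0 : ℝ) τbar,
          (fderiv ℝ f1 (zc τ)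
              + ∑ j, lc τ j • fderiv ℝ (fun z => g1 z j) (zc τ)
              + ∑ i, mc τ i • fderiv ℝ (fun z => h1 z i) (zc τ) = 0) ∧
          g1 (zc τ) = 0 ∧
          (∀ i, h1 (zc τ) i < 0) ∧
          (∀ i, 0 < mc τ i) ∧
          (∀ i, -(mc τ i * h1 (zc τ) i) = τ)) ∧
        Tendsto (fun τ => (zc τ, lc τ, mc τ)) (𝓝[>] (0 : ℝ)) (𝓝 (zs, lams, mus)) ∧
        (∀ τ ∈ Set.Ioo (0 : ℝ) τbar, ‖zc τ - zs‖ ≤ C * τ) := by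
  classical
  -- basic differentiability facts
  have hdf1 : Differentiable ℝ f1 := hf.differentiable (by norm_num)
  have hdg1 : ∀ j, Differentiable ℝ (fun z => g1 z j) :=
    fun j => (contDiff_pi.1 hg j).differentiable (by norm_num)
  have hdh1 : ∀ k, Differentiable ℝ (fun z => h1 z k) :=
    fun k => (contDiff_pi.1 hh k).differentiable (by norm_num)
  have hfd1 : ContDiff ℝ 1 (fun z => fderiv ℝ f1 z) := hf.fderiv_right (by norm_num)
  have hgd1 : ∀ j, ContDiff ℝ 1 (fun z => fderiv ℝ (fun w => g1 w j) z) :=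
    fun j => (contDiff_pi.1 hg j).fderiv_right (by norm_num)
  have hhd1 : ∀ k, ContDiff ℝ 1 (fun z => fderiv ℝ (fun w => h1 w k) z) :=
    fun k => (contDiff_pi.1 hh k).fderiv_right (by norm_num)
  -- second derivatives
  set Df2 : (Fin n → ℝ) →L[ℝ] ((Fin n → ℝ) →L[ℝ] ℝ) :=
    fderiv ℝ (fun z => fderiv ℝ f1 z) zs with hDf2def
  set Dg2 : Fin m → ((Fin n → ℝ) →L[ℝ] ((Fin n → ℝ) →L[ℝ] ℝ)) :=
    fun j => fderiv ℝ (fun z => fderiv ℝ (fun w => g1 w j) z) zs with hDg2def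
  set Dh2 : Fin q → ((Fin n → ℝ) →L[ℝ] ((Fin n → ℝ) →L[ℝ] ℝ)) :=
    fun k => fderiv ℝ (fun z => fderiv ℝ (fun w => h1 w k) z) zs with hDh2def
  have hDf2' : HasFDerivAt (fun z => fderiv ℝ f1 z) Df2 zs :=
    ((hfd1.differentiable one_ne_zero) zs).hasFDerivAt
  have hDg2' : ∀ j, HasFDerivAt (fun z => fderiv ℝ (fun w => g1 w j) z) (Dg2 j) zs :=
    fun j => (((hgd1 j).differentiable one_ne_zero) zs).hasFDerivAt
  have hDh2' : ∀ k, HasFDerivAt (fun z => fderiv ℝ (fun w => h1 w k) z) (Dh2 k) zs :=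
    fun k => (((hhd1 k).differentiable one_ne_zero) zs).hasFDerivAt
  -- projections
  set Pz : (ℝ × EE n m q) →L[ℝ] (Fin n → ℝ) :=
    (ContinuousLinearMap.fst ℝ (Fin n → ℝ) ((Fin m → ℝ) × (Fin q → ℝ))).comp
      (ContinuousLinearMap.snd ℝ ℝ (EE n m q)) with hPzdef
  set Pl : (ℝ × EE n m q) →L[ℝ] (Fin m → ℝ) :=
    (ContinuousLinearMap.fst ℝ (Fin m → ℝ) (Fin q → ℝ)).comp
      (((ContinuousLinearMap.snd ℝ (Fin n → ℝ) ((Fin m → ℝ) × (Fin q → ℝ)))).comp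
        (ContinuousLinearMap.snd ℝ ℝ (EE n m q))) with hPldef
  set Pm : (ℝ × EE n m q) →L[ℝ] (Fin q → ℝ) :=
    (ContinuousLinearMap.snd ℝ (Fin m → ℝ) (Fin q → ℝ)).comp
      (((ContinuousLinearMap.snd ℝ (Fin n → ℝ) ((Fin m → ℝ) × (Fin q → ℝ)))).comp
        (ContinuousLinearMap.snd ℝ ℝ (EE n m q))) with hPmdef
  set Pt : (ℝ × EE n m q) →L[ℝ] ℝ := ContinuousLinearMap.fst ℝ ℝ (EE n m q) with hPtdef
  -- Hessian of the Lagrangian and the blocks of the KKT Jacobian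
  set HH : (Fin n → ℝ) →L[ℝ] ((Fin n → ℝ) →L[ℝ] ℝ) :=
    Df2 + ∑ j, lams j • Dg2 j + ∑ k, mus k • Dh2 k with hHHdef
  set LS : Fin n → ((ℝ × EE n m q) →L[ℝ] ℝ) := fun i =>
    (HH.flip (Pi.single i 1)).comp Pz
      + (∑ j, (fderiv ℝ (fun z => g1 z j) zs (Pi.single i 1)) •
          ((ContinuousLinearMap.proj j).comp Pl))
      + (∑ k, (fderiv ℝ (fun z => h1 z k) zs (Pi.single i 1)) •
          ((ContinuousLinearMap.proj k).comp Pm)) with hLSdef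
  set LG : Fin m → ((ℝ × EE n m q) →L[ℝ] ℝ) := fun j =>
    (fderiv ℝ (fun z => g1 z j) zs).comp Pz with hLGdef
  set LH : Fin q → ((ℝ × EE n m q) →L[ℝ] ℝ) := fun k =>
    (mus k • fderiv ℝ (fun z => h1 z k) zs).comp Pz
      + (h1 zs k) • ((ContinuousLinearMap.proj k).comp Pm) + Pt with hLHdef
  set D : (ℝ × EE n m q) →L[ℝ] (ℝ × EE n m q) :=
    Pt.prod ((ContinuousLinearMap.pi LS).prod
      ((ContinuousLinearMap.pi LG).prod (ContinuousLinearMap.pi LH))) with hDdef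
  set p0 : ℝ × EE n m q := (0, (zs, lams, mus)) with hp0def
  -- bridge between the SOSC hypothesis and HH
  have hbridge : ∀ d : Fin n → ℝ,
      fderiv ℝ (fun z => fderiv ℝ (fun w =>
        f1 w + ∑ j, lams j * g1 w j + ∑ i, mus i * h1 w i) z d) zs d = HH d d := by
    intro d
    have hA : DifferentiableAt ℝ (fun z => fderiv ℝ f1 z d) zs :=
      ((hfd1.differentiable one_ne_zero) zs).clm_apply (differentiableAt_const d)
    have hB : ∀ j, DifferentiableAt ℝ (fun z => fderiv ℝ (fun w => g1 w j) z d) zs :=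
      fun j => (((hgd1 j).differentiable one_ne_zero) zs).clm_apply (differentiableAt_const d)
    have hC : ∀ k, DifferentiableAt ℝ (fun z => fderiv ℝ (fun w => h1 w k) z d) zs :=
      fun k => (((hhd1 k).differentiable one_ne_zero) zs).clm_apply (differentiableAt_const d)
    have hfun : (fun z => fderiv ℝ (fun w =>
        f1 w + ∑ j, lams j * g1 w j + ∑ i, mus i * h1 w i) z d)
        = fun z => fderiv ℝ f1 z d + ∑ j, lams j * fderiv ℝ (fun w => g1 w j) z d
            + ∑ k, mus k * fderiv ℝ (fun w => h1 w k) z d := by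
      funext z
      have d2 : DifferentiableAt ℝ (fun w => ∑ j, lams j * g1 w j) z :=
        DifferentiableAt.fun_sum fun j _ => (hdg1 j z).const_mul (lams j)
      have d3 : DifferentiableAt ℝ (fun w => ∑ k, mus k * h1 w k) z :=
        DifferentiableAt.fun_sum fun k _ => (hdh1 k z).const_mul (mus k)
      rw [fderiv_fun_add ((hdf1 z).fun_add d2) d3, fderiv_fun_add (hdf1 z) d2,
        fderiv_fun_sum (fun j _ => (hdg1 j z).const_mul (lams j)),
        fderiv_fun_sum (fun k _ => (hdh1 k z).const_mul (mus k))]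
      simp only [ContinuousLinearMap.add_apply, ContinuousLinearMap.coe_sum',
        Finset.sum_apply]
      congr 1
      · congr 1
        refine Finset.sum_congr rfl fun j _ => ?_
        rw [fderiv_const_mul (hdg1 j z) (lams j)]
        simp
      · refine Finset.sum_congr rfl fun k _ => ?_
        rw [fderiv_const_mul (hdh1 k z) (mus k)]
        simp
    rw [hfun]
    have d2 : DifferentiableAt ℝ
        (fun z => ∑ j, lams j * fderiv ℝ (fun w => g1 w j) z d) zs :=
      DifferentiableAt.fun_sum fun j _ => (hB j).const_mul (lams j)
    have d3 : DifferentiableAt ℝ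
        (fun z => ∑ k, mus k * fderiv ℝ (fun w => h1 w k) z d) zs :=
      DifferentiableAt.fun_sum fun k _ => (hC k).const_mul (mus k)
    rw [fderiv_fun_add (hA.fun_add d2) d3, fderiv_fun_add hA d2,
      fderiv_fun_sum (fun j _ => (hB j).const_mul (lams j)),
      fderiv_fun_sum (fun k _ => (hC k).const_mul (mus k))]
    have eA : fderiv ℝ (fun z => fderiv ℝ f1 z d) zs = Df2.flip d := by
      rw [fderiv_clm_apply ((hfd1.differentiable one_ne_zero) zs) (differentiableAt_const d)]
      simp [hDf2def]
    have eB : ∀ j, fderiv ℝ (fun z => fderiv ℝ (fun w => g1 w j) z d) zs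
        = (Dg2 j).flip d := by
      intro j
      rw [fderiv_clm_apply (((hgd1 j).differentiable one_ne_zero) zs) (differentiableAt_const d)]
      simp [hDg2def]
    have eC : ∀ k, fderiv ℝ (fun z => fderiv ℝ (fun w => h1 w k) z d) zs
        = (Dh2 k).flip d := by
      intro k
      rw [fderiv_clm_apply (((hhd1 k).differentiable one_ne_zero) zs) (differentiableAt_const d)]
      simp [hDh2def]
    have eB' : ∀ j, fderiv ℝ (fun z => lams j * fderiv ℝ (fun w => g1 w j) z d) zs
        = lams j • (Dg2 j).flip d := by
      intro j
      rw [fderiv_const_mul (hB j) (lams j), eB j]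
    have eC' : ∀ k, fderiv ℝ (fun z => mus k * fderiv ℝ (fun w => h1 w k) z d) zs
        = mus k • (Dh2 k).flip d := by
      intro k
      rw [fderiv_const_mul (hC k) (mus k), eC k]
    simp only [eA, eB', eC', hHHdef]
    simp [ContinuousLinearMap.add_apply, ContinuousLinearMap.coe_sum', Finset.sum_apply,
      ContinuousLinearMap.smul_apply, ContinuousLinearMap.flip_apply]

  -- the derivative of Phi at p0
  have hD : HasFDerivAt (Phi f1 g1 h1) D p0 := by
    have hPzd : HasFDerivAt (fun p : ℝ × EE n m q => p.2.1) Pz p0 := Pz.hasFDerivAt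
    show HasFDerivAt (fun p : ℝ × EE n m q =>
      ((p.1 : ℝ), (Sfun f1 g1 h1 p.2, g1 p.2.1, fun k => p.2.2.2 k * h1 p.2.1 k + p.1))) D p0
    refine HasFDerivAt.prodMk ?_ (HasFDerivAt.prodMk ?_ (HasFDerivAt.prodMk ?_ ?_))
    · exact hasFDerivAt_fst
    · -- stationarity block
      refine hasFDerivAt_pi.2 fun i => ?_
      show HasFDerivAt (fun p : ℝ × EE n m q =>
        fderiv ℝ f1 p.2.1 (Pi.single i 1)
          + ∑ j, p.2.2.1 j * fderiv ℝ (fun z => g1 z j) p.2.1 (Pi.single i 1)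
          + ∑ k, p.2.2.2 k * fderiv ℝ (fun z => h1 z k) p.2.1 (Pi.single i 1)) (LS i) p0
      have T1 : HasFDerivAt (fun zz => fderiv ℝ f1 zz (Pi.single i 1))
          (Df2.flip (Pi.single i 1)) zs := by
        have h0 := hDf2'.clm_apply (hasFDerivAt_const (Pi.single i (1:ℝ)) zs)
        refine h0.congr_fderiv ?_
        ext v
        simp
      have T1' : HasFDerivAt (fun p : ℝ × EE n m q => fderiv ℝ f1 p.2.1 (Pi.single i 1))
          ((Df2.flip (Pi.single i 1)).comp Pz) p0 := HasFDerivAt.comp p0 (f := fun p : ℝ × EE n m q => p.2.1) T1 hPzd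
      have TG : ∀ j, HasFDerivAt
          (fun p : ℝ × EE n m q => p.2.2.1 j * fderiv ℝ (fun z => g1 z j) p.2.1 (Pi.single i 1))
          (p0.2.2.1 j • (((Dg2 j).flip (Pi.single i 1)).comp Pz)
            + (fderiv ℝ (fun z => g1 z j) p0.2.1 (Pi.single i 1)) •
              ((ContinuousLinearMap.proj j).comp Pl)) p0 := by
        intro j
        have hc : HasFDerivAt (fun p : ℝ × EE n m q => p.2.2.1 j)
            ((ContinuousLinearMap.proj j).comp Pl) p0 :=
          ((ContinuousLinearMap.proj j).comp Pl).hasFDerivAt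
        have hd0 : HasFDerivAt (fun zz => fderiv ℝ (fun z => g1 z j) zz (Pi.single i 1))
            ((Dg2 j).flip (Pi.single i 1)) zs := by
          have h0 := (hDg2' j).clm_apply (hasFDerivAt_const (Pi.single i (1:ℝ)) zs)
          refine h0.congr_fderiv ?_
          ext v
          simp
        exact hc.mul (HasFDerivAt.comp p0 (f := fun p : ℝ × EE n m q => p.2.1) hd0 hPzd)
      have TH : ∀ k, HasFDerivAt
          (fun p : ℝ × EE n m q => p.2.2.2 k * fderiv ℝ (fun z => h1 z k) p.2.1 (Pi.single i 1))
          (p0.2.2.2 k • (((Dh2 k).flip (Pi.single i 1)).comp Pz)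
            + (fderiv ℝ (fun z => h1 z k) p0.2.1 (Pi.single i 1)) •
              ((ContinuousLinearMap.proj k).comp Pm)) p0 := by
        intro k
        have hc : HasFDerivAt (fun p : ℝ × EE n m q => p.2.2.2 k)
            ((ContinuousLinearMap.proj k).comp Pm) p0 :=
          ((ContinuousLinearMap.proj k).comp Pm).hasFDerivAt
        have hd0 : HasFDerivAt (fun zz => fderiv ℝ (fun z => h1 z k) zz (Pi.single i 1))
            ((Dh2 k).flip (Pi.single i 1)) zs := by
          have h0 := (hDh2' k).clm_apply (hasFDerivAt_const (Pi.single i (1:ℝ)) zs)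
          refine h0.congr_fderiv ?_
          ext v
          simp
        exact hc.mul (HasFDerivAt.comp p0 (f := fun p : ℝ × EE n m q => p.2.1) hd0 hPzd)
      refine ((T1'.add (HasFDerivAt.fun_sum fun j (_ : j ∈ Finset.univ) => TG j)).add
        (HasFDerivAt.fun_sum fun k (_ : k ∈ Finset.univ) => TH k)).congr_fderiv ?_
      refine ContinuousLinearMap.ext fun v => ?_
      simp only [hLSdef, hp0def, ContinuousLinearMap.add_apply, ContinuousLinearMap.coe_sum',
        Finset.sum_apply, ContinuousLinearMap.smul_apply, ContinuousLinearMap.coe_comp',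
        Function.comp_apply, ContinuousLinearMap.flip_apply, ContinuousLinearMap.proj_apply,
        smul_eq_mul, hHHdef, hPzdef, hPldef, hPmdef, ContinuousLinearMap.coe_fst',
        ContinuousLinearMap.coe_snd', Finset.sum_add_distrib]
      ring
    · -- equality constraints block
      refine hasFDerivAt_pi.2 fun j => ?_
      exact HasFDerivAt.comp p0 (f := fun p : ℝ × EE n m q => p.2.1) ((hdg1 j zs).hasFDerivAt) hPzd
    · -- complementarity block
      refine hasFDerivAt_pi.2 fun k => ?_
      show HasFDerivAt (fun p : ℝ × EE n m q => p.2.2.2 k * h1 p.2.1 k + p.1) (LH k) p0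
      have hc : HasFDerivAt (fun p : ℝ × EE n m q => p.2.2.2 k)
          ((ContinuousLinearMap.proj k).comp Pm) p0 :=
        ((ContinuousLinearMap.proj k).comp Pm).hasFDerivAt
      have hd0 : HasFDerivAt (fun p : ℝ × EE n m q => h1 p.2.1 k)
          ((fderiv ℝ (fun z => h1 z k) zs).comp Pz) p0 :=
        HasFDerivAt.comp p0 (f := fun p : ℝ × EE n m q => p.2.1) ((hdh1 k zs).hasFDerivAt) hPzd
      refine ((hc.mul hd0).add hasFDerivAt_fst).congr_fderiv ?_
      refine ContinuousLinearMap.ext fun v => ?_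
      simp only [hLHdef, hp0def, ContinuousLinearMap.add_apply, ContinuousLinearMap.smul_apply,
        ContinuousLinearMap.coe_comp', Function.comp_apply, ContinuousLinearMap.proj_apply,
        smul_eq_mul, hPzdef, hPmdef, hPtdef, ContinuousLinearMap.coe_fst',
        ContinuousLinearMap.coe_snd']

  -- injectivity of the KKT Jacobian
  have hinj : Function.Injective D := by
    refine (injective_iff_map_eq_zero D).2 ?_
    rintro ⟨dt, dz, dl, dm⟩ hv
    have hv0 : D (dt, dz, dl, dm) = (dt, (fun i => (LS i) (dt, dz, dl, dm)),
        (fun j => (LG j) (dt, dz, dl, dm)), (fun k => (LH k) (dt, dz, dl, dm))) := rfl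
    rw [hv0] at hv
    rw [Prod.ext_iff, Prod.ext_iff, Prod.ext_iff] at hv
    simp only [Prod.fst_zero, Prod.snd_zero] at hv
    obtain ⟨hv1, hv2, hv3, hv4⟩ := hv
    rw [funext_iff] at hv2 hv3 hv4
    have hv2' : ∀ i, HH dz (Pi.single i 1)
        + ∑ j, dl j * fderiv ℝ (fun z => g1 z j) zs (Pi.single i 1)
        + ∑ k, dm k * fderiv ℝ (fun z => h1 z k) zs (Pi.single i 1) = 0 := by
      intro i
      have := hv2 i
      simpa [hLSdef, hPzdef, hPldef, hPmdef, mul_comm] using this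
    have hv3' : ∀ j, fderiv ℝ (fun z => g1 z j) zs dz = 0 := by
      intro j
      have := hv3 j
      simpa [hLGdef, hPzdef] using this
    have hv4' : ∀ k, mus k * fderiv ℝ (fun z => h1 z k) zs dz + h1 zs k * dm k + dt = 0 := by
      intro k
      have := hv4 k
      simpa [hLHdef, hPzdef, hPmdef, hPtdef] using this
    have hdt : dt = 0 := hv1
    rw [hdt] at hv4'
    have hdm0 : ∀ k, h1 zs k ≠ 0 → dm k = 0 := by
      intro k hk
      have hmu0 : mus k = 0 := by
        rcases mul_eq_zero.1 (hcompl k) with h' | h'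
        · exact h'
        · exact absurd h' hk
      have := hv4' k
      rw [hmu0] at this
      have : h1 zs k * dm k = 0 := by linarith
      rcases mul_eq_zero.1 this with h' | h'
      · exact absurd h' hk
      · exact h'
    have hbdz : ∀ k, h1 zs k = 0 → fderiv ℝ (fun z => h1 z k) zs dz = 0 := by
      intro k hk
      have := hv4' k
      rw [hk] at this
      have h2 : mus k * fderiv ℝ (fun z => h1 z k) zs dz = 0 := by linarith
      rcases mul_eq_zero.1 h2 with h' | h'
      · exact absurd h' (ne_of_gt (hstrict k hk))
      · exact h'
    -- assemble the CLM equation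
    have hCLM : HH dz + (∑ j, dl j • fderiv ℝ (fun z => g1 z j) zs)
        + ∑ k, dm k • fderiv ℝ (fun z => h1 z k) zs = 0 := by
      apply clm_eq_zero_of_basis
      intro i
      have := hv2' i
      simpa [ContinuousLinearMap.add_apply, ContinuousLinearMap.coe_sum', Finset.sum_apply,
        ContinuousLinearMap.smul_apply, smul_eq_mul] using this
    have happ : HH dz dz + ∑ j, dl j * fderiv ℝ (fun z => g1 z j) zs dz
        + ∑ k, dm k * fderiv ℝ (fun z => h1 z k) zs dz = 0 := by
      have := congrArg (fun (L : (Fin n → ℝ) →L[ℝ] ℝ) => L dz) hCLM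
      simpa [ContinuousLinearMap.add_apply, ContinuousLinearMap.coe_sum', Finset.sum_apply,
        ContinuousLinearMap.smul_apply, smul_eq_mul] using this
    have hsumg : ∑ j, dl j * fderiv ℝ (fun z => g1 z j) zs dz = 0 :=
      Finset.sum_eq_zero fun j _ => by rw [hv3' j, mul_zero]
    have hsumh : ∑ k, dm k * fderiv ℝ (fun z => h1 z k) zs dz = 0 := by
      refine Finset.sum_eq_zero fun k _ => ?_
      by_cases hk : h1 zs k = 0
      · rw [hbdz k hk, mul_zero]
      · rw [hdm0 k hk, zero_mul]
    have hHH0 : HH dz dz = 0 := by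
      rw [hsumg, hsumh] at happ
      linarith
    have hdz : dz = 0 := by
      by_contra hne
      have hpos := hSOSC dz hne hv3' (fun k hk => hbdz k hk)
      rw [hbridge dz] at hpos
      exact absurd hHH0 (ne_of_gt hpos)
    rw [hdz] at hCLM
    rw [map_zero, zero_add] at hCLM
    -- LICQ step
    set c : Fin m ⊕ {k : Fin q // h1 zs k = 0} → ℝ :=
      Sum.elim dl (fun k => dm (k : Fin q)) with hcdef
    have hsub : ∑ k : {k : Fin q // h1 zs k = 0}, dm (k : Fin q) •
          fderiv ℝ (fun z => h1 z (k : Fin q)) zs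
        = ∑ k, dm k • fderiv ℝ (fun z => h1 z k) zs := by
      rw [← Finset.sum_subtype (Finset.univ.filter (fun k => h1 zs k = 0))
        (p := fun k => h1 zs k = 0) (by simp)
        (f := fun k => dm k • fderiv ℝ (fun z => h1 z k) zs)]
      refine Finset.sum_subset (Finset.filter_subset _ _) fun k _ hk => ?_
      have hk' : h1 zs k ≠ 0 := by simpa using hk
      rw [hdm0 k hk', zero_smul]
    have hc : ∑ s, c s • (Sum.elim
        (fun j : Fin m => fderiv ℝ (fun z => g1 z j) zs)
        (fun k : {k : Fin q // h1 zs k = 0} =>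
          fderiv ℝ (fun z => h1 z (k : Fin q)) zs)) s = 0 := by
      rw [Fintype.sum_sum_type]
      simp only [hcdef, Sum.elim_inl, Sum.elim_inr]
      rw [hsub]
      exact hCLM
    have hzero := Fintype.linearIndependent_iff.1 hLICQ c hc
    have hdl : ∀ j, dl j = 0 := fun j => hzero (Sum.inl j)
    have hdm : ∀ k, dm k = 0 := by
      intro k
      by_cases hk : h1 zs k = 0
      · exact hzero (Sum.inr ⟨k, hk⟩)
      · exact hdm0 k hk
    have hdl' : dl = 0 := funext fun j => hdl j
    have hdm' : dm = 0 := funext fun k => hdm k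
    simp [hdt, hdz, hdl', hdm', Prod.ext_iff]

  have hPhip0 : Phi f1 g1 h1 p0 = (0, 0) := by
    have hS0 : ∀ i, Sfun f1 g1 h1 (zs, lams, mus) i = 0 := by
      intro i
      have h2 := congrArg (fun (L : (Fin n → ℝ) →L[ℝ] ℝ) => L (Pi.single i 1)) hstat
      simpa [Sfun, ContinuousLinearMap.add_apply, ContinuousLinearMap.coe_sum',
        Finset.sum_apply, ContinuousLinearMap.smul_apply, smul_eq_mul] using h2
    rw [hp0def]
    simp [Phi, Prod.ext_iff, funext_iff, hfeas_g, hS0, hcompl]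
  -- upgrade the derivative to a continuous linear equivalence
  have hsurj : Function.Surjective
      ⇑(D : (ℝ × EE n m q) →ₗ[ℝ] (ℝ × EE n m q)) :=
    LinearMap.injective_iff_surjective.1 hinj
  set eD : (ℝ × EE n m q) ≃ₗ[ℝ] (ℝ × EE n m q) :=
    LinearEquiv.ofBijective (D : (ℝ × EE n m q) →ₗ[ℝ] (ℝ × EE n m q)) ⟨hinj, hsurj⟩
    with heDdef
  set De : (ℝ × EE n m q) ≃L[ℝ] (ℝ × EE n m q) := eD.toContinuousLinearEquiv with hDedef
  have hcoe : ((De : (ℝ × EE n m q) ≃L[ℝ] (ℝ × EE n m q)) :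
      (ℝ × EE n m q) →L[ℝ] (ℝ × EE n m q)) = D :=
    ContinuousLinearMap.ext fun v => rfl
  have hD' : HasFDerivAt (Phi f1 g1 h1)
      ((De : (ℝ × EE n m q) ≃L[ℝ] (ℝ × EE n m q)) : (ℝ × EE n m q) →L[ℝ] (ℝ × EE n m q)) p0 :=
    hD.congr_fderiv hcoe.symm
  have hPhiCD : ContDiff ℝ 1 (Phi f1 g1 h1) := contDiff_Phi f1 g1 h1 hf hg hh
  have hstrictD : HasStrictFDerivAt (Phi f1 g1 h1)
      ((De : (ℝ × EE n m q) ≃L[ℝ] (ℝ × EE n m q)) : (ℝ × EE n m q) →L[ℝ] (ℝ × EE n m q)) p0 :=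
    hPhiCD.contDiffAt.hasStrictFDerivAt' hD' one_ne_zero
  set inv : ℝ × EE n m q → ℝ × EE n m q :=
    HasStrictFDerivAt.localInverse (Phi f1 g1 h1) De p0 hstrictD with hinvdef
  have hinvCD : ContDiffAt ℝ 1 inv ((0 : ℝ), (0 : EE n m q)) := by
    have h2 := hPhiCD.contDiffAt.to_localInverse (f' := De) hD' one_ne_zero
    rw [hPhip0] at h2
    exact h2
  have hrinv : ∀ᶠ y1 in 𝓝 ((0:ℝ), (0 : EE n m q)), Phi f1 g1 h1 (inv y1) = y1 := by
    have h2 := hstrictD.eventually_right_inverse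
    rwa [hPhip0] at h2
  have hinv00 : inv ((0:ℝ), (0:EE n m q)) = p0 := by
    rw [← hPhip0]
    exact hstrictD.localInverse_apply_image
  set x : ℝ → ℝ × EE n m q := fun τ => inv (τ, (0 : EE n m q)) with hxdef
  have hx0 : x 0 = p0 := hinv00
  have hemb : ContDiff ℝ 1 (fun τ : ℝ => ((τ, (0 : EE n m q)) : ℝ × EE n m q)) :=
    contDiff_id.prodMk contDiff_const
  have hxCD : ContDiffAt ℝ 1 x 0 := ContDiffAt.comp (0:ℝ) hinvCD hemb.contDiffAt
  obtain ⟨u, hu, hxu⟩ := hxCD.contDiffOn le_rfl (by norm_num)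
  obtain ⟨K, t, ht, hlip⟩ := hxCD.exists_lipschitzOnWith
  have htends : Tendsto (fun τ : ℝ => ((τ, (0 : EE n m q)) : ℝ × EE n m q)) (𝓝 0)
      (𝓝 ((0:ℝ), (0:EE n m q))) := by
    have h2 : ContinuousAt (fun τ : ℝ => ((τ, (0 : EE n m q)) : ℝ × EE n m q)) 0 :=
      hemb.continuous.continuousAt
    exact h2
  have hrinv' : ∀ᶠ τ in 𝓝 (0:ℝ), Phi f1 g1 h1 (x τ) = (τ, (0 : EE n m q)) :=
    htends.eventually hrinv
  have hxcont : ContinuousAt x 0 := hxCD.continuousAt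
  have hsign : ∀ᶠ τ in 𝓝 (0:ℝ), ∀ k, (h1 zs k = 0 → 0 < (x τ).2.2.2 k)
      ∧ (h1 zs k ≠ 0 → h1 ((x τ).2.1) k < 0) := by
    rw [eventually_all]
    intro k
    refine Filter.Eventually.and ?_ ?_
    · by_cases hk : h1 zs k = 0
      · have hccont : ContinuousAt (fun τ => (x τ).2.2.2 k) 0 :=
          (((continuous_apply k).comp
            (continuous_snd.comp (continuous_snd.comp continuous_snd))).continuousAt).comp hxcont
        have hval : (x 0).2.2.2 k = mus k := by rw [hx0]
        have hgt : 0 < (x 0).2.2.2 k := by rw [hval]; exact hstrict k hk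
        have h2 := hccont.eventually_const_lt hgt
        exact h2.mono fun τ hτ _ => hτ
      · exact Filter.Eventually.of_forall fun τ h' => absurd h' hk
    · by_cases hk : h1 zs k = 0
      · exact Filter.Eventually.of_forall fun τ h' => absurd hk h'
      · have hlt : h1 zs k < 0 := lt_of_le_of_ne (hfeas_h k) hk
        have hccont : ContinuousAt (fun τ => h1 ((x τ).2.1) k) 0 :=
          (((continuous_apply k).comp
            (hh.continuous.comp (continuous_fst.comp continuous_snd))).continuousAt).comp hxcont
        have hval : h1 ((x 0).2.1) k = h1 zs k := by rw [hx0]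
        have hlt0 : h1 ((x 0).2.1) k < 0 := by rw [hval]; exact hlt
        have h2 := hccont.eventually_lt_const hlt0
        exact h2.mono fun τ hτ _ => hτ
  have hall : ∀ᶠ τ in 𝓝 (0:ℝ),
      (Phi f1 g1 h1 (x τ) = (τ, (0 : EE n m q))) ∧
      (∀ k, (h1 zs k = 0 → 0 < (x τ).2.2.2 k) ∧ (h1 zs k ≠ 0 → h1 ((x τ).2.1) k < 0)) :=
    hrinv'.and hsign
  have hmem : (u ∩ t) ∩ {τ : ℝ |
      (Phi f1 g1 h1 (x τ) = (τ, (0 : EE n m q))) ∧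
      (∀ k, (h1 zs k = 0 → 0 < (x τ).2.2.2 k) ∧ (h1 zs k ≠ 0 → h1 ((x τ).2.1) k < 0))}
      ∈ 𝓝 (0:ℝ) := Filter.inter_mem (Filter.inter_mem hu ht) hall
  obtain ⟨ε, hεpos, hball⟩ := Metric.mem_nhds_iff.1 hmem
  have hIoo : ∀ τ ∈ Set.Ioo (0:ℝ) ε, τ ∈ (u ∩ t) ∩ {τ : ℝ |
      (Phi f1 g1 h1 (x τ) = (τ, (0 : EE n m q))) ∧
      (∀ k, (h1 zs k = 0 → 0 < (x τ).2.2.2 k) ∧ (h1 zs k ≠ 0 → h1 ((x τ).2.1) k < 0))} := by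
    intro τ hτ
    apply hball
    rw [Metric.mem_ball, Real.dist_eq, sub_zero, abs_of_pos hτ.1]
    exact hτ.2
  refine ⟨ε, (K:ℝ) + 1, hεpos, by positivity,
    fun τ => (x τ).2.1, fun τ => (x τ).2.2.1, fun τ => (x τ).2.2.2, ?_, ?_, ?_, ?_, ?_, ?_⟩
  · exact (contDiff_fst.comp contDiff_snd).comp_contDiffOn
      (hxu.mono fun τ hτ => ((hIoo τ hτ).1).1)
  · exact ((contDiff_fst.comp contDiff_snd).comp contDiff_snd).comp_contDiffOn
      (hxu.mono fun τ hτ => ((hIoo τ hτ).1).1)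
  · exact ((contDiff_snd.comp contDiff_snd).comp contDiff_snd).comp_contDiffOn
      (hxu.mono fun τ hτ => ((hIoo τ hτ).1).1)
  · -- the smoothed KKT system
    intro τ hτ
    obtain ⟨-, hPhiτ, hsgn⟩ := hIoo τ hτ
    have hτ1 : (x τ).1 = τ := congrArg Prod.fst hPhiτ
    have hS : Sfun f1 g1 h1 (x τ).2 = 0 := congrArg (fun v : ℝ × EE n m q => v.2.1) hPhiτ
    have hgz : g1 ((x τ).2.1) = 0 := congrArg (fun v : ℝ × EE n m q => v.2.2.1) hPhiτ
    have hcompτ : ∀ k, (x τ).2.2.2 k * h1 ((x τ).2.1) k + (x τ).1 = 0 := fun k =>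
      congrFun (congrArg (fun v : ℝ × EE n m q => v.2.2.2) hPhiτ) k
    have hprod : ∀ k, (x τ).2.2.2 k * h1 ((x τ).2.1) k = -τ := by
      intro k
      have := hcompτ k
      rw [hτ1] at this
      linarith
    have hhlt : ∀ k, h1 ((x τ).2.1) k < 0 := by
      intro k
      by_cases hk : h1 zs k = 0
      · have hm := (hsgn k).1 hk
        nlinarith [hprod k, hτ.1]
      · exact (hsgn k).2 hk
    have hmpos : ∀ k, 0 < (x τ).2.2.2 k := by
      intro k
      by_cases hk : h1 zs k = 0
      · exact (hsgn k).1 hk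
      · have hhk := (hsgn k).2 hk
        nlinarith [hprod k, hτ.1]
    refine ⟨?_, hgz, hhlt, hmpos, fun k => by rw [hprod k]; ring⟩
    apply clm_eq_zero_of_basis
    intro i
    have h2 := congrFun hS i
    simpa [Sfun, ContinuousLinearMap.add_apply, ContinuousLinearMap.coe_sum',
      Finset.sum_apply, ContinuousLinearMap.smul_apply, smul_eq_mul] using h2
  · -- convergence
    have hx' : Tendsto x (𝓝 0) (𝓝 p0) := by rw [← hx0]; exact hxcont
    have h2 : Tendsto (fun τ => (x τ).2) (𝓝 (0:ℝ)) (𝓝 p0.2) :=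
      (continuous_snd.tendsto p0).comp hx'
    exact h2.mono_left nhdsWithin_le_nhds
  · -- error bound
    intro τ hτ
    obtain ⟨⟨-, hτt⟩, -⟩ := hIoo τ hτ
    have h0t : (0:ℝ) ∈ t := mem_of_mem_nhds ht
    have hd := hlip.dist_le_mul τ hτt 0 h0t
    have hcomp : dist ((x τ).2.1) ((x 0).2.1) ≤ dist (x τ) (x 0) := by
      calc dist ((x τ).2.1) ((x 0).2.1) ≤ dist ((x τ).2) ((x 0).2) := by
            rw [Prod.dist_eq]; exact le_max_left _ _
        _ ≤ dist (x τ) (x 0) := by rw [Prod.dist_eq]; exact le_max_right _ _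
    have hzseq : (x 0).2.1 = zs := by rw [hx0]
    have hdist : dist τ (0:ℝ) = τ := by
      rw [Real.dist_eq, sub_zero, abs_of_pos hτ.1]
    calc ‖(x τ).2.1 - zs‖ = dist ((x τ).2.1) ((x 0).2.1) := by
          rw [hzseq, dist_eq_norm]
      _ ≤ dist (x τ) (x 0) := hcomp
      _ ≤ K * dist τ 0 := hd
      _ = (K:ℝ) * τ := by rw [hdist]
      _ ≤ ((K:ℝ) + 1) * τ := by nlinarith [hτ.1]

end CPaux

open Filter Topology

/-- **Theorem 3, point 1 (central path: existence, convergence, O(τ) error bound).**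
If `(z*, λ*, μ*)` is a KKT point at `θ̄` satisfying LICQ, SOSC and strict
complementarity, then there are `τ̄ > 0`, `C > 0` and a continuously differentiable map
`τ ↦ (z(τ), λ(τ), μ(τ))` on `(0, τ̄)` solving, for each `τ ∈ (0, τ̄)`, the smoothed KKT
system at `θ̄` (stationarity, `g = 0`, `h < 0`, `μ > 0`, `−μᵢhᵢ = τ`), with
`(z(τ), λ(τ), μ(τ)) → (z*, λ*, μ*)` as `τ → 0⁺` and `‖z(τ) − z*‖ ≤ C τ`. -/
theorem central_path_existence_and_convergence
    {n p m q : ℕ}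
    (f : (Fin n → ℝ) → (Fin p → ℝ) → ℝ)
    (g : (Fin n → ℝ) → (Fin p → ℝ) → Fin m → ℝ)
    (h : (Fin n → ℝ) → (Fin p → ℝ) → Fin q → ℝ)
    (hf : ContDiff ℝ 2 (fun x : (Fin n → ℝ) × (Fin p → ℝ) => f x.1 x.2))
    (hg : ContDiff ℝ 2 (fun x : (Fin n → ℝ) × (Fin p → ℝ) => g x.1 x.2))
    (hh : ContDiff ℝ 2 (fun x : (Fin n → ℝ) × (Fin p → ℝ) => h x.1 x.2))
    (θbar : Fin p → ℝ) (zs : Fin n → ℝ) (lams : Fin m → ℝ) (mus : Fin q → ℝ)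
    (hstat : fderiv ℝ (fun z => f z θbar) zs
        + ∑ j, lams j • fderiv ℝ (fun z => g z θbar j) zs
        + ∑ i, mus i • fderiv ℝ (fun z => h z θbar i) zs = 0)
    (hfeas_g : g zs θbar = 0)
    (hfeas_h : ∀ i, h zs θbar i ≤ 0)
    (hmu_nonneg : ∀ i, 0 ≤ mus i)
    (hcompl : ∀ i, mus i * h zs θbar i = 0)
    (hstrict : ∀ i, h zs θbar i = 0 → 0 < mus i)
    (hLICQ : LinearIndependent ℝ (Sum.elim
        (fun j : Fin m => fderiv ℝ (fun z => g z θbar j) zs)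
        (fun i : {i : Fin q // h zs θbar i = 0} =>
          fderiv ℝ (fun z => h z θbar (i : Fin q)) zs)))
    (hSOSC : ∀ d : Fin n → ℝ, d ≠ 0 →
        (∀ j, fderiv ℝ (fun z => g z θbar j) zs d = 0) →
        (∀ i, h zs θbar i = 0 → fderiv ℝ (fun z => h z θbar i) zs d = 0) →
        0 < fderiv ℝ (fun z => fderiv ℝ (fun w =>
              f w θbar + ∑ j, lams j * g w θbar j + ∑ i, mus i * h w θbar i) z d) zs d) :
    ∃ τbar C : ℝ, 0 < τbar ∧ 0 < C ∧
      ∃ (zc : ℝ → (Fin n → ℝ)) (lc : ℝ → (Fin m → ℝ)) (mc : ℝ → (Fin q → ℝ)),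
        ContDiffOn ℝ 1 zc (Set.Ioo 0 τbar) ∧
        ContDiffOn ℝ 1 lc (Set.Ioo 0 τbar) ∧
        ContDiffOn ℝ 1 mc (Set.Ioo 0 τbar) ∧
        (∀ τ ∈ Set.Ioo (0 : ℝ) τbar,
          (fderiv ℝ (fun z => f z θbar) (zc τ)
              + ∑ j, lc τ j • fderiv ℝ (fun z => g z θbar j) (zc τ)
              + ∑ i, mc τ i • fderiv ℝ (fun z => h z θbar i) (zc τ) = 0) ∧
          g (zc τ) θbar = 0 ∧
          (∀ i, h (zc τ) θbar i < 0) ∧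
          (∀ i, 0 < mc τ i) ∧
          (∀ i, -(mc τ i * h (zc τ) θbar i) = τ)) ∧
        Tendsto (fun τ => (zc τ, lc τ, mc τ)) (𝓝[>] (0 : ℝ)) (𝓝 (zs, lams, mus)) ∧
        (∀ τ ∈ Set.Ioo (0 : ℝ) τbar, ‖zc τ - zs‖ ≤ C * τ) := by
  have hf1 : ContDiff ℝ 2 (fun z => f z θbar) := by
    exact hf.comp (contDiff_id.prodMk contDiff_const)
  have hg1 : ContDiff ℝ 2 (fun z => g z θbar) := by
    exact hg.comp (contDiff_id.prodMk contDiff_const)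
  have hh1 : ContDiff ℝ 2 (fun z => h z θbar) := by
    exact hh.comp (contDiff_id.prodMk contDiff_const)
  exact aux (fun z => f z θbar) (fun z => g z θbar) (fun z => h z θbar)
    hf1 hg1 hh1 zs lams mus hstat hfeas_g hfeas_h hcompl hstrict hLICQ hSOSC
end

section
/- Consider the parametric NLP min_{z∈ℝⁿ} f(z;θ) s.t. g(z;θ)=0, h(z;θ)≤0 and suppose (z*,λ*,μ*) is a KKT point at θ̄ satisfying LICQ, SOSC and strict complementarity. Then there exists τ̄ > 0 such that for every fixed τ ∈ (0, τ̄) there is an open neighborhood U_τ of θ̄ and a continuously differentiable map θ ↦ (z(τ;θ), λ(τ;θ), μ(τ;θ)) on U_τ such that for every θ ∈ U_τ this triple satisfies the smoothed KKT system at parameter θ and barrier parameter τ (stationarity ∇_z f + ∇_z g λ + ∇_z h μ = 0, g(z;θ)=0, h(z;θ)<0, μ>0, −μᵢhᵢ(z;θ)=τ), is the unique such solution in a fixed neighborhood of (z(τ;θ̄),λ(τ;θ̄),μ(τ;θ̄)), and lim_{τ→0⁺} (z(τ;θ̄),λ(τ;θ̄),μ(τ;θ̄)) = (z*,λ*,μ*).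 -/
open Filter Topology

section SKKTAux
open ContinuousLinearMap

namespace SKKT2

variable {n p m q : ℕ}

-- repeat abbreviations (will be merged)
abbrev XX (n p m q : ℕ) :=
  (ℝ × (Fin p → ℝ)) × ((Fin n → ℝ) × (Fin m → ℝ) × (Fin q → ℝ))
abbrev EE (n m q : ℕ) := (Fin n → ℝ) × (Fin m → ℝ) × (Fin q → ℝ)

noncomputable def piC (n p m q : ℕ) : XX n p m q →L[ℝ] (Fin n → ℝ) × (Fin p → ℝ) :=
  ((fst ℝ (Fin n → ℝ) ((Fin m → ℝ) × (Fin q → ℝ))).comp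
    (snd ℝ (ℝ × (Fin p → ℝ)) (EE n m q))).prod
  ((snd ℝ ℝ (Fin p → ℝ)).comp (fst ℝ (ℝ × (Fin p → ℝ)) (EE n m q)))
noncomputable def coordT (n p m q : ℕ) : XX n p m q →L[ℝ] ℝ :=
  (fst ℝ ℝ (Fin p → ℝ)).comp (fst ℝ (ℝ × (Fin p → ℝ)) (EE n m q))
noncomputable def coordL (n p q : ℕ) (j : Fin m) : XX n p m q →L[ℝ] ℝ :=
  (ContinuousLinearMap.proj j).comp
    (((fst ℝ (Fin m → ℝ) (Fin q → ℝ)).comp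
      (snd ℝ (Fin n → ℝ) ((Fin m → ℝ) × (Fin q → ℝ)))).comp
      (snd ℝ (ℝ × (Fin p → ℝ)) (EE n m q)))
noncomputable def coordM (n p m : ℕ) (i : Fin q) : XX n p m q →L[ℝ] ℝ :=
  (ContinuousLinearMap.proj i).comp
    (((snd ℝ (Fin m → ℝ) (Fin q → ℝ)).comp
      (snd ℝ (Fin n → ℝ) ((Fin m → ℝ) × (Fin q → ℝ)))).comp
      (snd ℝ (ℝ × (Fin p → ℝ)) (EE n m q)))

lemma piC_apply (x : XX n p m q) : piC n p m q x = (x.2.1, x.1.2) := rfl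
lemma coordT_apply (x : XX n p m q) : coordT n p m q x = x.1.1 := rfl
lemma coordL_apply (j : Fin m) (x : XX n p m q) : coordL n p q j x = x.2.2.1 j := rfl
lemma coordM_apply (i : Fin q) (x : XX n p m q) : coordM n p m i x = x.2.2.2 i := rfl

variable (f : (Fin n → ℝ) → (Fin p → ℝ) → ℝ)
  (g : (Fin n → ℝ) → (Fin p → ℝ) → Fin m → ℝ)
  (h : (Fin n → ℝ) → (Fin p → ℝ) → Fin q → ℝ)

def Ft : (Fin n → ℝ) × (Fin p → ℝ) → ℝ := fun x => f x.1 x.2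
def Gt (j : Fin m) : (Fin n → ℝ) × (Fin p → ℝ) → ℝ := fun x => g x.1 x.2 j
def Ht (i : Fin q) : (Fin n → ℝ) × (Fin p → ℝ) → ℝ := fun x => h x.1 x.2 i

noncomputable def Phi : XX n p m q → EE n m q := fun x =>
  (fun k => fderiv ℝ (Ft f) (x.2.1, x.1.2) (Pi.single k 1, 0)
      + ∑ j, x.2.2.1 j * fderiv ℝ (Gt g j) (x.2.1, x.1.2) (Pi.single k 1, 0)
      + ∑ i, x.2.2.2 i * fderiv ℝ (Ht h i) (x.2.1, x.1.2) (Pi.single k 1, 0),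
    g x.2.1 x.1.2,
    fun i => -(x.2.2.2 i * h x.2.1 x.1.2 i) - x.1.1)

variable (zs : Fin n → ℝ) (θbar : Fin p → ℝ) (lams : Fin m → ℝ) (mus : Fin q → ℝ)

noncomputable def evalk (n p : ℕ) (k : Fin n) :
    (((Fin n → ℝ) × (Fin p → ℝ)) →L[ℝ] ℝ) →L[ℝ] ℝ :=
  ContinuousLinearMap.apply ℝ ℝ ((Pi.single k 1, 0) : (Fin n → ℝ) × (Fin p → ℝ))

noncomputable def BF := fderiv ℝ (fun y => fderiv ℝ (Ft f) y) (zs, θbar)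
noncomputable def BG (j : Fin m) := fderiv ℝ (fun y => fderiv ℝ (Gt g j) y) (zs, θbar)
noncomputable def BH (i : Fin q) := fderiv ℝ (fun y => fderiv ℝ (Ht h i) y) (zs, θbar)

noncomputable def DS : XX n p m q →L[ℝ] (Fin n → ℝ) :=
  ContinuousLinearMap.pi fun k =>
    (evalk n p k).comp ((BF f zs θbar).comp (piC n p m q))
    + ∑ j, (lams j • ((evalk n p k).comp ((BG g zs θbar j).comp (piC n p m q)))
        + (fderiv ℝ (Gt g j) (zs, θbar) (Pi.single k 1, 0)) • coordL n p q j)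
    + ∑ i, (mus i • ((evalk n p k).comp ((BH h zs θbar i).comp (piC n p m q)))
        + (fderiv ℝ (Ht h i) (zs, θbar) (Pi.single k 1, 0)) • coordM n p m i)

noncomputable def DG2 : XX n p m q →L[ℝ] (Fin m → ℝ) :=
  (fderiv ℝ (fun x : (Fin n → ℝ) × (Fin p → ℝ) => g x.1 x.2) (zs, θbar)).comp (piC n p m q)

noncomputable def DH3 : XX n p m q →L[ℝ] (Fin q → ℝ) :=
  ContinuousLinearMap.pi fun i =>
    (-(mus i • ((fderiv ℝ (Ht h i) (zs, θbar)).comp (piC n p m q))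
        + (h zs θbar i) • coordM n p m i)) - coordT n p m q

noncomputable def DPhi : XX n p m q →L[ℝ] EE n m q :=
  (DS f g h zs θbar lams mus).prod ((DG2 g zs θbar).prod (DH3 h zs θbar mus))

variable (hf : ContDiff ℝ 2 (fun x : (Fin n → ℝ) × (Fin p → ℝ) => f x.1 x.2))
  (hg : ContDiff ℝ 2 (fun x : (Fin n → ℝ) × (Fin p → ℝ) => g x.1 x.2))
  (hh : ContDiff ℝ 2 (fun x : (Fin n → ℝ) × (Fin p → ℝ) => h x.1 x.2))

section
include hg
lemma contDiff_Gt (j : Fin m) : ContDiff ℝ 2 (Gt g j) :=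
  (ContinuousLinearMap.proj j : (Fin m → ℝ) →L[ℝ] ℝ).contDiff.comp hg
end
section
include hh
lemma contDiff_Ht (i : Fin q) : ContDiff ℝ 2 (Ht h i) :=
  (ContinuousLinearMap.proj i : (Fin q → ℝ) →L[ℝ] ℝ).contDiff.comp hh
end

section
include hf hg hh

lemma hasFDerivAt_Phi :
    HasFDerivAt (Phi f g h) (DPhi f g h zs θbar lams mus)
      (((0 : ℝ), θbar), (zs, lams, mus)) := by
  set p₀ : XX n p m q := (((0 : ℝ), θbar), (zs, lams, mus)) with hp₀
  have hπd : HasFDerivAt (fun x : XX n p m q => ((x.2.1, x.1.2) : (Fin n → ℝ) × (Fin p → ℝ)))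
      (piC n p m q) p₀ := (piC n p m q).hasFDerivAt
  refine HasFDerivAt.prodMk ?_ (HasFDerivAt.prodMk ?_ ?_)
  · refine hasFDerivAt_pi.2 fun k => ?_
    have t1 : HasFDerivAt
        (fun x : XX n p m q => fderiv ℝ (Ft f) (x.2.1, x.1.2) (Pi.single k 1, 0))
        ((evalk n p k).comp ((BF f zs θbar).comp (piC n p m q))) p₀ := by
      have h1 : HasFDerivAt (fun y => fderiv ℝ (Ft f) y) (BF f zs θbar) (zs, θbar) :=
        (((hf.fderiv_right (m := 1) (by norm_num)).differentiable (by norm_num)) (zs, θbar)).hasFDerivAt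
      exact ((ContinuousLinearMap.apply ℝ ℝ
        ((Pi.single k 1, 0) : (Fin n → ℝ) × (Fin p → ℝ))).hasFDerivAt).comp p₀
        (h1.comp p₀ hπd)
    have t2 : HasFDerivAt
        (fun x : XX n p m q =>
          ∑ j, x.2.2.1 j * fderiv ℝ (Gt g j) (x.2.1, x.1.2) (Pi.single k 1, 0))
        (∑ j, (lams j • ((evalk n p k).comp ((BG g zs θbar j).comp (piC n p m q)))
          + (fderiv ℝ (Gt g j) (zs, θbar) (Pi.single k 1, 0)) • coordL n p q j)) p₀ := by
      refine HasFDerivAt.fun_sum fun j _ => ?_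
      have ha : HasFDerivAt (fun x : XX n p m q => x.2.2.1 j) (coordL n p q j) p₀ :=
        (coordL n p q j).hasFDerivAt
      have hb : HasFDerivAt
          (fun x : XX n p m q => fderiv ℝ (Gt g j) (x.2.1, x.1.2) (Pi.single k 1, 0))
          ((evalk n p k).comp ((BG g zs θbar j).comp (piC n p m q))) p₀ := by
        have h1 : HasFDerivAt (fun y => fderiv ℝ (Gt g j) y) (BG g zs θbar j) (zs, θbar) :=
          ((((contDiff_Gt g hg j).fderiv_right (m := 1) (by norm_num)).differentiable (by norm_num))
            (zs, θbar)).hasFDerivAt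
        exact ((ContinuousLinearMap.apply ℝ ℝ
          ((Pi.single k 1, 0) : (Fin n → ℝ) × (Fin p → ℝ))).hasFDerivAt).comp p₀
          (h1.comp p₀ hπd)
      exact ha.mul hb
    have t3 : HasFDerivAt
        (fun x : XX n p m q =>
          ∑ i, x.2.2.2 i * fderiv ℝ (Ht h i) (x.2.1, x.1.2) (Pi.single k 1, 0))
        (∑ i, (mus i • ((evalk n p k).comp ((BH h zs θbar i).comp (piC n p m q)))
          + (fderiv ℝ (Ht h i) (zs, θbar) (Pi.single k 1, 0)) • coordM n p m i)) p₀ := by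
      refine HasFDerivAt.fun_sum fun i _ => ?_
      have ha : HasFDerivAt (fun x : XX n p m q => x.2.2.2 i) (coordM n p m i) p₀ :=
        (coordM n p m i).hasFDerivAt
      have hb : HasFDerivAt
          (fun x : XX n p m q => fderiv ℝ (Ht h i) (x.2.1, x.1.2) (Pi.single k 1, 0))
          ((evalk n p k).comp ((BH h zs θbar i).comp (piC n p m q))) p₀ := by
        have h1 : HasFDerivAt (fun y => fderiv ℝ (Ht h i) y) (BH h zs θbar i) (zs, θbar) :=
          ((((contDiff_Ht h hh i).fderiv_right (m := 1) (by norm_num)).differentiable (by norm_num))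
            (zs, θbar)).hasFDerivAt
        exact ((ContinuousLinearMap.apply ℝ ℝ
          ((Pi.single k 1, 0) : (Fin n → ℝ) × (Fin p → ℝ))).hasFDerivAt).comp p₀
          (h1.comp p₀ hπd)
      exact ha.mul hb
    exact (t1.add t2).add t3
  · exact ((hg.differentiable (by norm_num) (zs, θbar)).hasFDerivAt).comp p₀ hπd
  · refine hasFDerivAt_pi.2 fun i => ?_
    have hc : HasFDerivAt (fun x : XX n p m q => x.2.2.2 i) (coordM n p m i) p₀ :=
      (coordM n p m i).hasFDerivAt
    have hd : HasFDerivAt (fun x : XX n p m q => h x.2.1 x.1.2 i)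
        ((fderiv ℝ (Ht h i) (zs, θbar)).comp (piC n p m q)) p₀ :=
      by have := (((contDiff_Ht h hh i).differentiable (by norm_num) (zs, θbar)).hasFDerivAt).comp p₀ hπd; exact this
    have ht : HasFDerivAt (fun x : XX n p m q => x.1.1) (coordT n p m q) p₀ :=
      (coordT n p m q).hasFDerivAt
    exact ((hc.mul hd).neg).sub ht
end


-- basic pi lemmas (copy from a.lean)
lemma clm_eq_zero {F : Type*} [NormedAddCommGroup F] [NormedSpace ℝ F]
    {T : (Fin n → ℝ) →L[ℝ] F} (hT : ∀ k, T (Pi.single k 1) = 0) : T = 0 := by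
  ext v
  have hv : v = ∑ k, v k • (Pi.single k (1:ℝ) : Fin n → ℝ) := by
    funext l
    simp [Finset.sum_apply, Pi.single_apply, Finset.sum_ite_eq', mul_comm]
  rw [hv]
  simp [hT]

lemma pair_sum {T : ((Fin n → ℝ) × (Fin p → ℝ)) →L[ℝ] ℝ} (v : Fin n → ℝ) :
    ∑ k, v k * T (Pi.single k 1, 0) = T (v, 0) := by
  have hv : ((v, 0) : (Fin n → ℝ) × (Fin p → ℝ))
      = ∑ k, v k • ((Pi.single k (1:ℝ), 0) : (Fin n → ℝ) × (Fin p → ℝ)) := by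
    rw [Prod.ext_iff]
    constructor
    · simp only [Prod.fst_sum, Prod.smul_mk]
      funext l
      simp [Finset.sum_apply, Pi.single_apply, Finset.sum_ite_eq', mul_comm]
    · simp only [Prod.snd_sum, Prod.smul_mk]
      simp
  rw [hv, map_sum]
  refine Finset.sum_congr rfl fun k _ => ?_
  rw [map_smul, smul_eq_mul]

section
variable (hfeas_h : ∀ i, h zs θbar i ≤ 0)
  (hcompl : ∀ i, mus i * h zs θbar i = 0)
  (hstrict : ∀ i, h zs θbar i = 0 → 0 < mus i)

include hfeas_h hcompl hstrict in
lemma keq_bijective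
    (hgdiff : Differentiable ℝ (fun x : (Fin n → ℝ) × (Fin p → ℝ) => g x.1 x.2))
    (hLICQ' : LinearIndependent ℝ (Sum.elim
        (fun j : Fin m => (fderiv ℝ (Gt g j) (zs, θbar)).comp
          (ContinuousLinearMap.inl ℝ (Fin n → ℝ) (Fin p → ℝ)))
        (fun i : {i : Fin q // h zs θbar i = 0} =>
          (fderiv ℝ (Ht h (i : Fin q)) (zs, θbar)).comp
            (ContinuousLinearMap.inl ℝ (Fin n → ℝ) (Fin p → ℝ)))))
    (hSOSC' : ∀ d : Fin n → ℝ, d ≠ 0 →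
        (∀ j, fderiv ℝ (Gt g j) (zs, θbar) (d, 0) = 0) →
        (∀ i, h zs θbar i = 0 → fderiv ℝ (Ht h i) (zs, θbar) (d, 0) = 0) →
        0 < BF f zs θbar (d, 0) (d, 0)
          + ∑ j, lams j * BG g zs θbar j (d, 0) (d, 0)
          + ∑ i, mus i * BH h zs θbar i (d, 0) (d, 0)) :
    Function.Bijective
      ((DPhi f g h zs θbar lams mus).comp
        (ContinuousLinearMap.inr ℝ (ℝ × (Fin p → ℝ)) (EE n m q))) := by
  set Keq := (DPhi f g h zs θbar lams mus).comp
        (ContinuousLinearMap.inr ℝ (ℝ × (Fin p → ℝ)) (EE n m q)) with hKeq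
  have hinj : Function.Injective Keq := by
    refine (injective_iff_map_eq_zero Keq).2 ?_
    rintro ⟨dz, dl, du⟩ hw
    set vG : Fin m → ((Fin n → ℝ) × (Fin p → ℝ)) →L[ℝ] ℝ :=
      fun j => fderiv ℝ (Gt g j) (zs, θbar) with hvG
    set vH : Fin q → ((Fin n → ℝ) × (Fin p → ℝ)) →L[ℝ] ℝ :=
      fun i => fderiv ℝ (Ht h i) (zs, θbar) with hvH
    -- the three component equations
    have hw1 := congrArg Prod.fst hw
    have hw2 := congrArg (fun w : EE n m q => w.2.1) hw
    have hw3 := congrArg (fun w : EE n m q => w.2.2) hw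
    have hπv : piC n p m q (((0 : ℝ × (Fin p → ℝ)), (dz, dl, du)) : XX n p m q)
        = (dz, 0) := rfl
    have hE1 : ∀ k, BF f zs θbar (dz, 0) (Pi.single k 1, 0)
        + (∑ j, (lams j * BG g zs θbar j (dz, 0) (Pi.single k 1, 0)
            + vG j (Pi.single k 1, 0) * dl j))
        + (∑ i, (mus i * BH h zs θbar i (dz, 0) (Pi.single k 1, 0)
            + vH i (Pi.single k 1, 0) * du i)) = 0 := by
      intro k
      have := congrFun hw1 k
      simpa only [Keq, DPhi, DS, evalk, hvG, hvH, ContinuousLinearMap.prod_apply, ContinuousLinearMap.comp_apply,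
        ContinuousLinearMap.pi_apply, ContinuousLinearMap.add_apply,
        ContinuousLinearMap.sum_apply, ContinuousLinearMap.coe_smul', Pi.smul_apply,
        ContinuousLinearMap.apply_apply, ContinuousLinearMap.inr_apply,
        ContinuousLinearMap.neg_apply, ContinuousLinearMap.sub_apply,
        piC_apply, coordT_apply, coordL_apply, coordM_apply, smul_eq_mul,
        Prod.fst_zero, Prod.snd_zero, Pi.zero_apply] using this
    have hE2 : ∀ j, vG j (dz, 0) = 0 := by
      intro j
      have h2 : fderiv ℝ (fun x : (Fin n → ℝ) × (Fin p → ℝ) => g x.1 x.2) (zs, θbar)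
          (dz, 0) = 0 := by
        simpa only [Keq, DPhi, DG2, ContinuousLinearMap.prod_apply, ContinuousLinearMap.comp_apply,
        ContinuousLinearMap.pi_apply, ContinuousLinearMap.add_apply,
        ContinuousLinearMap.sum_apply, ContinuousLinearMap.coe_smul', Pi.smul_apply,
        ContinuousLinearMap.apply_apply, ContinuousLinearMap.inr_apply,
        ContinuousLinearMap.neg_apply, ContinuousLinearMap.sub_apply,
        piC_apply, coordT_apply, coordL_apply, coordM_apply, smul_eq_mul,
        Prod.fst_zero, Prod.snd_zero, Pi.zero_apply] using hw2
      have hproj : vG j = (ContinuousLinearMap.proj j :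
          (Fin m → ℝ) →L[ℝ] ℝ).comp
          (fderiv ℝ (fun x : (Fin n → ℝ) × (Fin p → ℝ) => g x.1 x.2) (zs, θbar)) := by
        have hc : HasFDerivAt (Gt g j)
            ((ContinuousLinearMap.proj j : (Fin m → ℝ) →L[ℝ] ℝ).comp
              (fderiv ℝ (fun x : (Fin n → ℝ) × (Fin p → ℝ) => g x.1 x.2) (zs, θbar)))
            (zs, θbar) :=
          ((ContinuousLinearMap.proj j : (Fin m → ℝ) →L[ℝ] ℝ).hasFDerivAt).comp _
            (hgdiff (zs, θbar)).hasFDerivAt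
        exact hc.fderiv
      rw [hproj]
      simp [h2]
    have hE3 : ∀ i, mus i * vH i (dz, 0) + h zs θbar i * du i = 0 := by
      intro i
      have := congrFun hw3 i
      have h3 : -(mus i * vH i (dz, 0) + h zs θbar i * du i) - 0 = 0 := by
        simpa only [Keq, DPhi, DH3, hvH, ContinuousLinearMap.prod_apply, ContinuousLinearMap.comp_apply,
        ContinuousLinearMap.pi_apply, ContinuousLinearMap.add_apply,
        ContinuousLinearMap.sum_apply, ContinuousLinearMap.coe_smul', Pi.smul_apply,
        ContinuousLinearMap.apply_apply, ContinuousLinearMap.inr_apply,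
        ContinuousLinearMap.neg_apply, ContinuousLinearMap.sub_apply,
        piC_apply, coordT_apply, coordL_apply, coordM_apply, smul_eq_mul,
        Prod.fst_zero, Prod.snd_zero, Pi.zero_apply] using this
      linarith
    have hinact : ∀ i, h zs θbar i < 0 → mus i = 0 := by
      intro i hi
      rcases mul_eq_zero.1 (hcompl i) with h0 | h0
      · exact h0
      · exact absurd h0 hi.ne
    have hdu0 : ∀ i, h zs θbar i < 0 → du i = 0 := by
      intro i hi
      have := hE3 i
      rw [hinact i hi] at this
      have : h zs θbar i * du i = 0 := by linarith
      rcases mul_eq_zero.1 this with h0 | h0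
      · exact absurd h0 hi.ne
      · exact h0
    have hact : ∀ i, h zs θbar i = 0 → vH i (dz, 0) = 0 := by
      intro i hi
      have := hE3 i
      rw [hi] at this
      have hmu := hstrict i hi
      have : mus i * vH i (dz, 0) = 0 := by linarith
      rcases mul_eq_zero.1 this with h0 | h0
      · exact absurd h0 hmu.ne'
      · exact h0
    -- pairing with dz
    have hpair : ∀ T : ((Fin n → ℝ) × (Fin p → ℝ)) →L[ℝ] ℝ,
        ∑ k, dz k * T (Pi.single k 1, 0) = T (dz, 0) := fun T => pair_sum dz
    have hquad : BF f zs θbar (dz, 0) (dz, 0)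
        + ∑ j, lams j * BG g zs θbar j (dz, 0) (dz, 0)
        + ∑ i, mus i * BH h zs θbar i (dz, 0) (dz, 0) = 0 := by
      have h0 : ∑ k, dz k * (BF f zs θbar (dz, 0) (Pi.single k 1, 0)
          + (∑ j, (lams j * BG g zs θbar j (dz, 0) (Pi.single k 1, 0)
              + vG j (Pi.single k 1, 0) * dl j))
          + (∑ i, (mus i * BH h zs θbar i (dz, 0) (Pi.single k 1, 0)
              + vH i (Pi.single k 1, 0) * du i))) = 0 := by
        refine Finset.sum_eq_zero fun k _ => ?_
        rw [hE1 k, mul_zero]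
      have e1 : ∑ k, dz k * (BF f zs θbar (dz, 0) (Pi.single k 1, 0)
          + (∑ j, (lams j * BG g zs θbar j (dz, 0) (Pi.single k 1, 0)
              + vG j (Pi.single k 1, 0) * dl j))
          + (∑ i, (mus i * BH h zs θbar i (dz, 0) (Pi.single k 1, 0)
              + vH i (Pi.single k 1, 0) * du i)))
          = (∑ k, dz k * BF f zs θbar (dz, 0) (Pi.single k 1, 0))
          + (∑ k, ∑ j, dz k * (lams j * BG g zs θbar j (dz, 0) (Pi.single k 1, 0)
              + vG j (Pi.single k 1, 0) * dl j))
          + (∑ k, ∑ i, dz k * (mus i * BH h zs θbar i (dz, 0) (Pi.single k 1, 0)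
              + vH i (Pi.single k 1, 0) * du i)) := by
        rw [← Finset.sum_add_distrib, ← Finset.sum_add_distrib]
        refine Finset.sum_congr rfl fun k _ => ?_
        rw [mul_add, mul_add, Finset.mul_sum, Finset.mul_sum]
      have eB : ∑ k, ∑ j, dz k * (lams j * BG g zs θbar j (dz, 0) (Pi.single k 1, 0)
              + vG j (Pi.single k 1, 0) * dl j)
          = ∑ j, lams j * BG g zs θbar j (dz, 0) (dz, 0) := by
        rw [Finset.sum_comm]
        refine Finset.sum_congr rfl fun j _ => ?_
        have : ∑ k, dz k * (lams j * BG g zs θbar j (dz, 0) (Pi.single k 1, 0)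
              + vG j (Pi.single k 1, 0) * dl j)
            = lams j * (∑ k, dz k * BG g zs θbar j (dz, 0) (Pi.single k 1, 0))
              + (∑ k, dz k * vG j (Pi.single k 1, 0)) * dl j := by
          rw [Finset.mul_sum, Finset.sum_mul, ← Finset.sum_add_distrib]
          exact Finset.sum_congr rfl fun k _ => by ring
        rw [this, hpair, hpair, hE2 j, zero_mul, add_zero]
      have eC : ∑ k, ∑ i, dz k * (mus i * BH h zs θbar i (dz, 0) (Pi.single k 1, 0)
              + vH i (Pi.single k 1, 0) * du i)
          = ∑ i, mus i * BH h zs θbar i (dz, 0) (dz, 0) := by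
        rw [Finset.sum_comm]
        refine Finset.sum_congr rfl fun i _ => ?_
        have : ∑ k, dz k * (mus i * BH h zs θbar i (dz, 0) (Pi.single k 1, 0)
              + vH i (Pi.single k 1, 0) * du i)
            = mus i * (∑ k, dz k * BH h zs θbar i (dz, 0) (Pi.single k 1, 0))
              + (∑ k, dz k * vH i (Pi.single k 1, 0)) * du i := by
          rw [Finset.mul_sum, Finset.sum_mul, ← Finset.sum_add_distrib]
          exact Finset.sum_congr rfl fun k _ => by ring
        rw [this, hpair, hpair]
        rcases (hfeas_h i).lt_or_eq with hi | hi
        · rw [hdu0 i hi, mul_zero, add_zero]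
        · rw [hact i hi, zero_mul, add_zero]
      rw [e1, eB, eC, hpair] at h0
      exact h0
    -- dz = 0 by SOSC
    have hdz : dz = 0 := by
      by_contra hne
      have := hSOSC' dz hne (fun j => hE2 j) (fun i hi => hact i hi)
      linarith
    subst hdz
    have hzero : ((0, 0) : (Fin n → ℝ) × (Fin p → ℝ)) = 0 := rfl
    -- remaining linear independence
    have hE1' : ∀ k, ∑ j, vG j (Pi.single k 1, 0) * dl j
        + ∑ i, vH i (Pi.single k 1, 0) * du i = 0 := by
      intro k
      have := hE1 k
      simpa [hzero] using this
    set T : (Fin n → ℝ) →L[ℝ] ℝ :=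
      ∑ j, dl j • ((vG j).comp (ContinuousLinearMap.inl ℝ (Fin n → ℝ) (Fin p → ℝ)))
      + ∑ i, du i • ((vH i).comp (ContinuousLinearMap.inl ℝ (Fin n → ℝ) (Fin p → ℝ)))
      with hT
    have hT0 : T = 0 := by
      refine clm_eq_zero fun k => ?_
      have := hE1' k
      simp only [hT, ContinuousLinearMap.add_apply, ContinuousLinearMap.sum_apply,
        ContinuousLinearMap.smul_apply, ContinuousLinearMap.comp_apply,
        ContinuousLinearMap.inl_apply, smul_eq_mul]
      rw [← this]
      congr 1 <;> exact Finset.sum_congr rfl fun _ _ => by ring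
    -- convert the μ-sum to the active subtype
    classical
    have hfilter : ∑ i, du i • ((vH i).comp
          (ContinuousLinearMap.inl ℝ (Fin n → ℝ) (Fin p → ℝ)))
        = ∑ i : {i : Fin q // h zs θbar i = 0}, du (i : Fin q) •
            ((vH (i : Fin q)).comp
              (ContinuousLinearMap.inl ℝ (Fin n → ℝ) (Fin p → ℝ))) := by
      rw [← Finset.sum_filter_of_ne (p := fun i => h zs θbar i = 0)
        (fun i _ hne => by
          by_contra hne2
          exact hne (by rw [hdu0 i ((hfeas_h i).lt_of_ne hne2), zero_smul]))]
      exact (Finset.sum_subtype (p := fun i => h zs θbar i = 0)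
        (Finset.univ.filter (fun i => h zs θbar i = 0))
        (fun i => by simp)
        (fun i => du i • ((vH i).comp
          (ContinuousLinearMap.inl ℝ (Fin n → ℝ) (Fin p → ℝ)))))
    have hcomb : ∑ s : Fin m ⊕ {i : Fin q // h zs θbar i = 0},
        (Sum.elim dl (fun i => du (i : Fin q)) s) • (Sum.elim
          (fun j : Fin m => (vG j).comp
            (ContinuousLinearMap.inl ℝ (Fin n → ℝ) (Fin p → ℝ)))
          (fun i : {i : Fin q // h zs θbar i = 0} =>
            (vH (i : Fin q)).comp
              (ContinuousLinearMap.inl ℝ (Fin n → ℝ) (Fin p → ℝ))) s) = 0 := by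
      have hthis : (∑ j, dl j • ((vG j).comp
            (ContinuousLinearMap.inl ℝ (Fin n → ℝ) (Fin p → ℝ))))
          + (∑ i : {i : Fin q // h zs θbar i = 0}, du (i : Fin q) •
              ((vH (i : Fin q)).comp
                (ContinuousLinearMap.inl ℝ (Fin n → ℝ) (Fin p → ℝ)))) = 0 := by
        rw [← hfilter, ← hT]
        exact hT0
      rw [Fintype.sum_sum_type]
      exact hthis
    have hzeroc := Fintype.linearIndependent_iff.1 hLICQ' _ hcomb
    have hdl : dl = 0 := funext fun j => hzeroc (Sum.inl j)
    have hdu : du = 0 := by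
      funext i
      rcases (hfeas_h i).lt_or_eq with hi | hi
      · exact hdu0 i hi
      · exact hzeroc (Sum.inr ⟨i, hi⟩)
    simp [hdl, hdu]
  have h2 : Function.Injective ⇑(Keq : EE n m q →ₗ[ℝ] EE n m q) := hinj
  exact ⟨hinj, (LinearMap.injective_iff_surjective).1 h2⟩

end


section
include hf hg hh
lemma contDiff_Phi : ContDiff ℝ 1 (Phi f g h) := by
  have hπ : ContDiff ℝ 2 fun x : XX n p m q => ((x.2.1, x.1.2) : (Fin n → ℝ) × (Fin p → ℝ)) :=
    (piC n p m q).contDiff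
  unfold Phi
  refine ContDiff.prodMk ?_ (ContDiff.prodMk ?_ ?_)
  · refine contDiff_pi.2 fun k => ?_
    have hF1 : ContDiff ℝ 1 fun x : XX n p m q => fderiv ℝ (Ft f) (x.2.1, x.1.2) :=
      (hf.fderiv_right (by norm_num)).comp (hπ.of_le (by norm_num))
    refine ContDiff.add (ContDiff.add ?_ ?_) ?_
    · exact hF1.clm_apply contDiff_const
    · refine ContDiff.sum fun j _ => ContDiff.mul ?_ ?_
      · exact (coordL n p q j).contDiff
      · exact (((contDiff_Gt g hg j).fderiv_right (by norm_num)).comp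
          (hπ.of_le (by norm_num))).clm_apply contDiff_const
    · refine ContDiff.sum fun i _ => ContDiff.mul ?_ ?_
      · exact (coordM n p m i).contDiff
      · exact (((contDiff_Ht h hh i).fderiv_right (by norm_num)).comp
          (hπ.of_le (by norm_num))).clm_apply contDiff_const
  · exact (hg.of_le (by norm_num)).comp (hπ.of_le (by norm_num))
  · refine contDiff_pi.2 fun i => ?_
    refine ContDiff.sub (ContDiff.neg (ContDiff.mul ?_ ?_)) ?_
    · exact (coordM n p m i).contDiff
    · exact ((contDiff_Ht h hh i).of_le (by norm_num)).comp (hπ.of_le (by norm_num))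
    · exact (coordT n p m q).contDiff
end

/-- Lagrangian -/
def Lag (lams : Fin m → ℝ) (mus : Fin q → ℝ) : (Fin n → ℝ) × (Fin p → ℝ) → ℝ :=
  fun x => f x.1 x.2 + ∑ j, lams j * g x.1 x.2 j + ∑ i, mus i * h x.1 x.2 i

section
include hf hg hh

lemma contDiff_Lag : ContDiff ℝ 2 (Lag f g h lams mus) :=
  (hf.add (ContDiff.sum fun j _ => contDiff_const.mul (contDiff_Gt g hg j))).add
    (ContDiff.sum fun i _ => contDiff_const.mul (contDiff_Ht h hh i))

lemma hasFDerivAt_fderiv_Lag :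
    HasFDerivAt (fun y => fderiv ℝ (Lag f g h lams mus) y)
      (BF f zs θbar + ∑ j, lams j • BG g zs θbar j + ∑ i, mus i • BH h zs θbar i)
      (zs, θbar) := by
  have hfun : (fun y => fderiv ℝ (Lag f g h lams mus) y)
      = fun y => fderiv ℝ (Ft f) y + ∑ j, lams j • fderiv ℝ (Gt g j) y
          + ∑ i, mus i • fderiv ℝ (Ht h i) y := by
    funext y
    have hF : HasFDerivAt (Ft f) (fderiv ℝ (Ft f) y) y :=
      (hf.differentiable (by norm_num) y).hasFDerivAt
    have hG : ∀ j, HasFDerivAt (Gt g j) (fderiv ℝ (Gt g j) y) y := fun j =>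
      ((contDiff_Gt g hg j).differentiable (by norm_num) y).hasFDerivAt
    have hH : ∀ i, HasFDerivAt (Ht h i) (fderiv ℝ (Ht h i) y) y := fun i =>
      ((contDiff_Ht h hh i).differentiable (by norm_num) y).hasFDerivAt
    have hsum : HasFDerivAt (Lag f g h lams mus)
        (fderiv ℝ (Ft f) y + ∑ j, lams j • fderiv ℝ (Gt g j) y
          + ∑ i, mus i • fderiv ℝ (Ht h i) y) y :=
      (hF.add (HasFDerivAt.fun_sum fun j _ => (hG j).const_mul (lams j))).add
        (HasFDerivAt.fun_sum fun i _ => (hH i).const_mul (mus i))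
    exact hsum.fderiv
  rw [hfun]
  have hBFd : HasFDerivAt (fun y => fderiv ℝ (Ft f) y) (BF f zs θbar) (zs, θbar) :=
    (((hf.fderiv_right (m := 1) (by norm_num)).differentiable (by norm_num)) (zs, θbar)).hasFDerivAt
  have hBGd : ∀ j, HasFDerivAt (fun y => fderiv ℝ (Gt g j) y) (BG g zs θbar j) (zs, θbar) :=
    fun j => ((((contDiff_Gt g hg j).fderiv_right (m := 1) (by norm_num)).differentiable (by norm_num))
      (zs, θbar)).hasFDerivAt
  have hBHd : ∀ i, HasFDerivAt (fun y => fderiv ℝ (Ht h i) y) (BH h zs θbar i) (zs, θbar) :=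
    fun i => ((((contDiff_Ht h hh i).fderiv_right (m := 1) (by norm_num)).differentiable (by norm_num))
      (zs, θbar)).hasFDerivAt
  exact (hBFd.add (HasFDerivAt.fun_sum fun j _ => (hBGd j).const_smul (lams j))).add
    (HasFDerivAt.fun_sum fun i _ => (hBHd i).const_smul (mus i))

end

/-- partial derivative lemmas -/
lemma hasPD {u : (Fin n → ℝ) × (Fin p → ℝ) → ℝ} (hu : Differentiable ℝ u)
    (z : Fin n → ℝ) (θ : Fin p → ℝ) :
    HasFDerivAt (fun w => u (w, θ))
      ((fderiv ℝ u (z, θ)).comp (ContinuousLinearMap.inl ℝ (Fin n → ℝ) (Fin p → ℝ))) z :=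
  ((hu (z, θ)).hasFDerivAt).comp z (hasFDerivAt_prodMk_left z θ)

lemma pderiv_eq {u : (Fin n → ℝ) × (Fin p → ℝ) → ℝ} (hu : Differentiable ℝ u)
    (z : Fin n → ℝ) (θ : Fin p → ℝ) :
    fderiv ℝ (fun w => u (w, θ)) z
      = (fderiv ℝ u (z, θ)).comp (ContinuousLinearMap.inl ℝ (Fin n → ℝ) (Fin p → ℝ)) :=
  (hasPD hu z θ).fderiv

lemma pderiv_apply {u : (Fin n → ℝ) × (Fin p → ℝ) → ℝ} (hu : Differentiable ℝ u)
    (z d : Fin n → ℝ) (θ : Fin p → ℝ) :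
    fderiv ℝ (fun w => u (w, θ)) z d = fderiv ℝ u (z, θ) (d, 0) := by
  rw [pderiv_eq hu z θ]; rfl

lemma claimA {u : (Fin n → ℝ) × (Fin p → ℝ) → ℝ} (hu : ContDiff ℝ 2 u)
    {B : ((Fin n → ℝ) × (Fin p → ℝ)) →L[ℝ] (((Fin n → ℝ) × (Fin p → ℝ)) →L[ℝ] ℝ)}
    (hB : HasFDerivAt (fun y => fderiv ℝ u y) B (zs, θbar)) (d : Fin n → ℝ) :
    fderiv ℝ (fun z => fderiv ℝ (fun w => u (w, θbar)) z d) zs d = B (d, 0) (d, 0) := by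
  have hud : Differentiable ℝ u := hu.differentiable (by norm_num)
  have hfun : (fun z => fderiv ℝ (fun w => u (w, θbar)) z d)
      = fun z => (ContinuousLinearMap.apply ℝ ℝ ((d, 0) : (Fin n → ℝ) × (Fin p → ℝ)))
          (fderiv ℝ u (z, θbar)) := by
    funext z
    rw [pderiv_apply hud z d θbar]; rfl
  rw [hfun]
  have h1 : HasFDerivAt (fun z : Fin n → ℝ => ((z, θbar) : (Fin n → ℝ) × (Fin p → ℝ)))
      (ContinuousLinearMap.inl ℝ (Fin n → ℝ) (Fin p → ℝ)) zs := hasFDerivAt_prodMk_left zs θbar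
  have h2 := hB.comp zs h1
  have h3 := ((ContinuousLinearMap.apply ℝ ℝ ((d, 0) : (Fin n → ℝ) × (Fin p → ℝ))).hasFDerivAt
      (x := fderiv ℝ u (zs, θbar))).comp zs h2
  have h4 : HasFDerivAt (fun z => (ContinuousLinearMap.apply ℝ ℝ
      ((d, 0) : (Fin n → ℝ) × (Fin p → ℝ))) (fderiv ℝ u (z, θbar)))
      (((ContinuousLinearMap.apply ℝ ℝ ((d, 0) : (Fin n → ℝ) × (Fin p → ℝ))).comp
        (B.comp (ContinuousLinearMap.inl ℝ (Fin n → ℝ) (Fin p → ℝ))))) zs := h3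
  rw [h4.fderiv]
  rfl

end SKKT2

end SKKTAux

/-- **Theorem 3, point 2 (differentiable parametric solution of the smoothed KKT system).**
If `(z*, λ*, μ*)` is a KKT point at `θ̄` satisfying LICQ, SOSC and strict
complementarity, then there is `τ̄ > 0` such that for every fixed `τ ∈ (0, τ̄)` there are
a neighborhood `U` of `θ̄` and a continuously differentiable map
`θ ↦ (z(τ;θ), λ(τ;θ), μ(τ;θ))` on `U` solving the smoothed KKT system at parameter `θ`
and barrier parameter `τ`, locally unique near `(z(τ;θ̄), λ(τ;θ̄), μ(τ;θ̄))`, and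
`(z(τ;θ̄), λ(τ;θ̄), μ(τ;θ̄)) → (z*, λ*, μ*)` as `τ → 0⁺`. -/
theorem smoothed_kkt_parametric_solution
    {n p m q : ℕ}
    (f : (Fin n → ℝ) → (Fin p → ℝ) → ℝ)
    (g : (Fin n → ℝ) → (Fin p → ℝ) → Fin m → ℝ)
    (h : (Fin n → ℝ) → (Fin p → ℝ) → Fin q → ℝ)
    (hf : ContDiff ℝ 2 (fun x : (Fin n → ℝ) × (Fin p → ℝ) => f x.1 x.2))
    (hg : ContDiff ℝ 2 (fun x : (Fin n → ℝ) × (Fin p → ℝ) => g x.1 x.2))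
    (hh : ContDiff ℝ 2 (fun x : (Fin n → ℝ) × (Fin p → ℝ) => h x.1 x.2))
    (θbar : Fin p → ℝ) (zs : Fin n → ℝ) (lams : Fin m → ℝ) (mus : Fin q → ℝ)
    -- (z*, λ*, μ*) is a KKT point at θ̄:
    (hstat : fderiv ℝ (fun z => f z θbar) zs
        + ∑ j, lams j • fderiv ℝ (fun z => g z θbar j) zs
        + ∑ i, mus i • fderiv ℝ (fun z => h z θbar i) zs = 0)
    (hfeas_g : g zs θbar = 0)
    (hfeas_h : ∀ i, h zs θbar i ≤ 0)
    (hmu_nonneg : ∀ i, 0 ≤ mus i)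
    (hcompl : ∀ i, mus i * h zs θbar i = 0)
    -- strict complementarity:
    (hstrict : ∀ i, h zs θbar i = 0 → 0 < mus i)
    -- LICQ:
    (hLICQ : LinearIndependent ℝ (Sum.elim
        (fun j : Fin m => fderiv ℝ (fun z => g z θbar j) zs)
        (fun i : {i : Fin q // h zs θbar i = 0} =>
          fderiv ℝ (fun z => h z θbar (i : Fin q)) zs)))
    -- SOSC:
    (hSOSC : ∀ d : Fin n → ℝ, d ≠ 0 →
        (∀ j, fderiv ℝ (fun z => g z θbar j) zs d = 0) →
        (∀ i, h zs θbar i = 0 → fderiv ℝ (fun z => h z θbar i) zs d = 0) →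
        0 < fderiv ℝ (fun z => fderiv ℝ (fun w =>
              f w θbar + ∑ j, lams j * g w θbar j + ∑ i, mus i * h w θbar i) z d) zs d) :
    ∃ τbar : ℝ, 0 < τbar ∧
      ∃ (zc : ℝ → (Fin p → ℝ) → (Fin n → ℝ))
        (lc : ℝ → (Fin p → ℝ) → (Fin m → ℝ))
        (mc : ℝ → (Fin p → ℝ) → (Fin q → ℝ)),
        (∀ τ ∈ Set.Ioo (0 : ℝ) τbar,
          ∃ U ∈ 𝓝 θbar,
            ContDiffOn ℝ 1 (zc τ) U ∧ ContDiffOn ℝ 1 (lc τ) U ∧ ContDiffOn ℝ 1 (mc τ) U ∧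
            (∀ θ ∈ U,
              (fderiv ℝ (fun z => f z θ) (zc τ θ)
                  + ∑ j, lc τ θ j • fderiv ℝ (fun z => g z θ j) (zc τ θ)
                  + ∑ i, mc τ θ i • fderiv ℝ (fun z => h z θ i) (zc τ θ) = 0) ∧
              g (zc τ θ) θ = 0 ∧
              (∀ i, h (zc τ θ) θ i < 0) ∧
              (∀ i, 0 < mc τ θ i) ∧
              (∀ i, -(mc τ θ i * h (zc τ θ) θ i) = τ)) ∧
            ∃ V ∈ 𝓝 (zc τ θbar, lc τ θbar, mc τ θbar),
              ∀ θ ∈ U, ∀ w : (Fin n → ℝ) × (Fin m → ℝ) × (Fin q → ℝ), w ∈ V →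
                ((fderiv ℝ (fun z => f z θ) w.1
                    + ∑ j, w.2.1 j • fderiv ℝ (fun z => g z θ j) w.1
                    + ∑ i, w.2.2 i • fderiv ℝ (fun z => h z θ i) w.1 = 0) ∧
                  g w.1 θ = 0 ∧
                  (∀ i, h w.1 θ i < 0) ∧
                  (∀ i, 0 < w.2.2 i) ∧
                  (∀ i, -(w.2.2 i * h w.1 θ i) = τ)) →
                w = (zc τ θ, lc τ θ, mc τ θ)) ∧
        Tendsto (fun τ => (zc τ θbar, lc τ θbar, mc τ θbar)) (𝓝[>] (0 : ℝ))
          (𝓝 (zs, lams, mus)) := by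
  classical
  open SKKT2 in
  -- basic differentiability
  have hfd : Differentiable ℝ (SKKT2.Ft f) := hf.differentiable (by norm_num)
  have hgd : Differentiable ℝ (fun x : (Fin n → ℝ) × (Fin p → ℝ) => g x.1 x.2) :=
    hg.differentiable (by norm_num)
  have hGtd : ∀ j, Differentiable ℝ (SKKT2.Gt g j) := fun j =>
    (SKKT2.contDiff_Gt g hg j).differentiable (by norm_num)
  have hHtd : ∀ i, Differentiable ℝ (SKKT2.Ht h i) := fun i =>
    (SKKT2.contDiff_Ht h hh i).differentiable (by norm_num)
  -- partial derivative equalities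
  have hfpL : ∀ (z : Fin n → ℝ) (θ : Fin p → ℝ), fderiv ℝ (fun w => f w θ) z
      = (fderiv ℝ (SKKT2.Ft f) (z, θ)).comp
        (ContinuousLinearMap.inl ℝ (Fin n → ℝ) (Fin p → ℝ)) :=
    fun z θ => SKKT2.pderiv_eq hfd z θ
  have hgpL : ∀ (j : Fin m) (z : Fin n → ℝ) (θ : Fin p → ℝ), fderiv ℝ (fun w => g w θ j) z
      = (fderiv ℝ (SKKT2.Gt g j) (z, θ)).comp
        (ContinuousLinearMap.inl ℝ (Fin n → ℝ) (Fin p → ℝ)) :=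
    fun j z θ => SKKT2.pderiv_eq (hGtd j) z θ
  have hhpL : ∀ (i : Fin q) (z : Fin n → ℝ) (θ : Fin p → ℝ), fderiv ℝ (fun w => h w θ i) z
      = (fderiv ℝ (SKKT2.Ht h i) (z, θ)).comp
        (ContinuousLinearMap.inl ℝ (Fin n → ℝ) (Fin p → ℝ)) :=
    fun i z θ => SKKT2.pderiv_eq (hHtd i) z θ
  have hfp : ∀ (z : Fin n → ℝ) (θ : Fin p → ℝ) (d : Fin n → ℝ),
      fderiv ℝ (fun w => f w θ) z d = fderiv ℝ (SKKT2.Ft f) (z, θ) (d, 0) :=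
    fun z θ d => by rw [hfpL z θ]; rfl
  have hgp : ∀ (j : Fin m) (z : Fin n → ℝ) (θ : Fin p → ℝ) (d : Fin n → ℝ),
      fderiv ℝ (fun w => g w θ j) z d = fderiv ℝ (SKKT2.Gt g j) (z, θ) (d, 0) :=
    fun j z θ d => by rw [hgpL j z θ]; rfl
  have hhp : ∀ (i : Fin q) (z : Fin n → ℝ) (θ : Fin p → ℝ) (d : Fin n → ℝ),
      fderiv ℝ (fun w => h w θ i) z d = fderiv ℝ (SKKT2.Ht h i) (z, θ) (d, 0) :=
    fun i z θ d => by rw [hhpL i z θ]; rfl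
  -- Phi = 0 iff smoothed KKT equations (modulo signs)
  have hPhiIff : ∀ (τ : ℝ) (θ : Fin p → ℝ) (w : SKKT2.EE n m q),
      SKKT2.Phi f g h ((τ, θ), w) = 0 ↔
        ((fderiv ℝ (fun z => f z θ) w.1
            + ∑ j, w.2.1 j • fderiv ℝ (fun z => g z θ j) w.1
            + ∑ i, w.2.2 i • fderiv ℝ (fun z => h z θ i) w.1 = 0) ∧
          g w.1 θ = 0 ∧ (∀ i, -(w.2.2 i * h w.1 θ i) - τ = 0)) := by
    intro τ θ w
    constructor
    · intro h0
      have h1 : (fun k => fderiv ℝ (SKKT2.Ft f) (w.1, θ) (Pi.single k 1, 0)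
          + ∑ j, w.2.1 j * fderiv ℝ (SKKT2.Gt g j) (w.1, θ) (Pi.single k 1, 0)
          + ∑ i, w.2.2 i * fderiv ℝ (SKKT2.Ht h i) (w.1, θ) (Pi.single k 1, 0))
          = (0 : Fin n → ℝ) := congrArg Prod.fst h0
      have h2 : g w.1 θ = 0 := congrArg (fun v : SKKT2.EE n m q => v.2.1) h0
      have h3 : (fun i => -(w.2.2 i * h w.1 θ i) - τ) = (0 : Fin q → ℝ) :=
        congrArg (fun v : SKKT2.EE n m q => v.2.2) h0
      refine ⟨?_, h2, fun i => congrFun h3 i⟩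
      refine SKKT2.clm_eq_zero fun k => ?_
      have hk := congrFun h1 k
      simp only [Pi.zero_apply] at hk
      simp only [ContinuousLinearMap.add_apply, ContinuousLinearMap.sum_apply,
        ContinuousLinearMap.smul_apply, smul_eq_mul, hfp, hgp, hhp]
      exact hk
    · rintro ⟨h1, h2, h3⟩
      have hS : ∀ k, fderiv ℝ (SKKT2.Ft f) (w.1, θ) (Pi.single k 1, 0)
          + ∑ j, w.2.1 j * fderiv ℝ (SKKT2.Gt g j) (w.1, θ) (Pi.single k 1, 0)
          + ∑ i, w.2.2 i * fderiv ℝ (SKKT2.Ht h i) (w.1, θ) (Pi.single k 1, 0) = 0 := by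
        intro k
        have hk := congrArg (fun T : (Fin n → ℝ) →L[ℝ] ℝ => T (Pi.single k 1)) h1
        simpa only [ContinuousLinearMap.add_apply, ContinuousLinearMap.sum_apply,
          ContinuousLinearMap.smul_apply, smul_eq_mul, hfp, hgp, hhp,
          ContinuousLinearMap.zero_apply] using hk
      refine Prod.ext ?_ (Prod.ext ?_ ?_)
      · funext k; exact hS k
      · exact h2
      · funext i; exact h3 i
  -- Phi vanishes at the base point
  have hPhi0 : SKKT2.Phi f g h (((0 : ℝ), θbar), (zs, lams, mus)) = 0 :=
    (hPhiIff 0 θbar (zs, lams, mus)).2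
      ⟨hstat, hfeas_g, fun i => by
        have := hcompl i
        simp only [] at this ⊢
        rw [show mus i * h zs θbar i = 0 from this]
        ring⟩
  -- LICQ in internal form
  have hLICQ' : LinearIndependent ℝ (Sum.elim
      (fun j : Fin m => (fderiv ℝ (SKKT2.Gt g j) (zs, θbar)).comp
        (ContinuousLinearMap.inl ℝ (Fin n → ℝ) (Fin p → ℝ)))
      (fun i : {i : Fin q // h zs θbar i = 0} =>
        (fderiv ℝ (SKKT2.Ht h (i : Fin q)) (zs, θbar)).comp
          (ContinuousLinearMap.inl ℝ (Fin n → ℝ) (Fin p → ℝ)))) := by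
    have heq : (Sum.elim
        (fun j : Fin m => (fderiv ℝ (SKKT2.Gt g j) (zs, θbar)).comp
          (ContinuousLinearMap.inl ℝ (Fin n → ℝ) (Fin p → ℝ)))
        (fun i : {i : Fin q // h zs θbar i = 0} =>
          (fderiv ℝ (SKKT2.Ht h (i : Fin q)) (zs, θbar)).comp
            (ContinuousLinearMap.inl ℝ (Fin n → ℝ) (Fin p → ℝ))))
        = (Sum.elim
        (fun j : Fin m => fderiv ℝ (fun z => g z θbar j) zs)
        (fun i : {i : Fin q // h zs θbar i = 0} =>
          fderiv ℝ (fun z => h z θbar (i : Fin q)) zs)) := by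
      funext s
      cases s with
      | inl j => exact (hgpL j zs θbar).symm
      | inr i => exact (hhpL i zs θbar).symm
    rw [heq]
    exact hLICQ
  -- SOSC in internal form
  have hSOSC' : ∀ d : Fin n → ℝ, d ≠ 0 →
      (∀ j, fderiv ℝ (SKKT2.Gt g j) (zs, θbar) (d, 0) = 0) →
      (∀ i, h zs θbar i = 0 → fderiv ℝ (SKKT2.Ht h i) (zs, θbar) (d, 0) = 0) →
      0 < SKKT2.BF f zs θbar (d, 0) (d, 0)
        + ∑ j, lams j * SKKT2.BG g zs θbar j (d, 0) (d, 0)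
        + ∑ i, mus i * SKKT2.BH h zs θbar i (d, 0) (d, 0) := by
    intro d hd t1 t2
    have t1' : ∀ j, fderiv ℝ (fun z => g z θbar j) zs d = 0 := fun j => by
      rw [hgp j zs θbar d]; exact t1 j
    have t2' : ∀ i, h zs θbar i = 0 → fderiv ℝ (fun z => h z θbar i) zs d = 0 := fun i hi => by
      rw [hhp i zs θbar d]; exact t2 i hi
    have h0 : (0 : ℝ) < fderiv ℝ (fun z => fderiv ℝ
        (fun w => SKKT2.Lag f g h lams mus (w, θbar)) z d) zs d := hSOSC d hd t1' t2'
    have hA := SKKT2.claimA zs θbar (SKKT2.contDiff_Lag f g h lams mus hf hg hh)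
      (SKKT2.hasFDerivAt_fderiv_Lag f g h zs θbar lams mus hf hg hh) d
    rw [hA] at h0
    simpa only [ContinuousLinearMap.add_apply, ContinuousLinearMap.sum_apply,
      ContinuousLinearMap.smul_apply, smul_eq_mul] using h0
  -- bijectivity of the E-block of the derivative
  have hbij := SKKT2.keq_bijective f g h zs θbar lams mus hfeas_h hcompl hstrict hgd
    hLICQ' hSOSC'
  -- build the continuous linear equivalence
  set Keq := (SKKT2.DPhi f g h zs θbar lams mus).comp
      (ContinuousLinearMap.inr ℝ (ℝ × (Fin p → ℝ)) (SKKT2.EE n m q)) with hKeqdef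
  have hbij2 : Function.Bijective ⇑(Keq : SKKT2.EE n m q →ₗ[ℝ] SKKT2.EE n m q) := hbij
  set K : SKKT2.EE n m q ≃L[ℝ] SKKT2.EE n m q :=
    (LinearEquiv.ofBijective (↑Keq) hbij2).toContinuousLinearEquiv with hKdef
  have hKapp : ∀ w, K w = Keq w := fun w => rfl
  have hKsymm : ∀ e, Keq (K.symm e) = e := fun e => by
    rw [← hKapp]; exact K.apply_symm_apply e
  set Tf : SKKT2.XX n p m q →L[ℝ] SKKT2.XX n p m q :=
    (ContinuousLinearMap.fst ℝ (ℝ × (Fin p → ℝ)) (SKKT2.EE n m q)).prod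
      (SKKT2.DPhi f g h zs θbar lams mus) with hTfdef
  set Tg : SKKT2.XX n p m q →L[ℝ] SKKT2.XX n p m q :=
    (ContinuousLinearMap.fst ℝ (ℝ × (Fin p → ℝ)) (SKKT2.EE n m q)).prod
      ((K.symm : SKKT2.EE n m q →L[ℝ] SKKT2.EE n m q).comp
        ((ContinuousLinearMap.snd ℝ (ℝ × (Fin p → ℝ)) (SKKT2.EE n m q))
          - (SKKT2.DPhi f g h zs θbar lams mus).comp
            ((ContinuousLinearMap.inl ℝ (ℝ × (Fin p → ℝ)) (SKKT2.EE n m q)).comp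
              (ContinuousLinearMap.fst ℝ (ℝ × (Fin p → ℝ)) (SKKT2.EE n m q))))) with hTgdef
  have hsplit : ∀ (a : ℝ × (Fin p → ℝ)) (w : SKKT2.EE n m q),
      SKKT2.DPhi f g h zs θbar lams mus ((a, w) : SKKT2.XX n p m q)
        = SKKT2.DPhi f g h zs θbar lams mus ((a, (0 : SKKT2.EE n m q)) : SKKT2.XX n p m q)
          + Keq w := by
    intro a w
    have hx : ((a, w) : SKKT2.XX n p m q)
        = ((a, (0 : SKKT2.EE n m q)) : SKKT2.XX n p m q)
          + (((0 : ℝ × (Fin p → ℝ)), w) : SKKT2.XX n p m q) := by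
      simp [Prod.ext_iff]
    rw [hx, map_add]
    rfl
  have hleft : Function.LeftInverse ⇑Tg ⇑Tf := by
    rintro ⟨a, w⟩
    have : Tg (Tf (a, w)) = (a, K.symm (SKKT2.DPhi f g h zs θbar lams mus ((a, w))
        - SKKT2.DPhi f g h zs θbar lams mus ((a, (0 : SKKT2.EE n m q))))) := rfl
    rw [this, hsplit a w]
    simp only [add_sub_cancel_left]
    rw [← hKapp, K.symm_apply_apply]
  have hright : Function.RightInverse ⇑Tg ⇑Tf := by
    rintro ⟨b, e⟩
    have : Tf (Tg (b, e)) = (b, SKKT2.DPhi f g h zs θbar lams mus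
        ((b, K.symm (e - SKKT2.DPhi f g h zs θbar lams mus
          ((b, (0 : SKKT2.EE n m q)) : SKKT2.XX n p m q))) : SKKT2.XX n p m q)) := rfl
    rw [this, hsplit b, hKsymm]
    simp
  set T : SKKT2.XX n p m q ≃L[ℝ] SKKT2.XX n p m q :=
    ContinuousLinearEquiv.equivOfInverse Tf Tg hleft hright with hTdef
  -- inverse function theorem
  set G : SKKT2.XX n p m q → SKKT2.XX n p m q :=
    fun x => (x.1, SKKT2.Phi f g h x) with hGdef
  set p₀ : SKKT2.XX n p m q := (((0 : ℝ), θbar), (zs, lams, mus)) with hp₀def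
  have hGfd : HasFDerivAt G (T : SKKT2.XX n p m q →L[ℝ] SKKT2.XX n p m q) p₀ := by
    have h0 : HasFDerivAt G Tf p₀ :=
      ((ContinuousLinearMap.fst ℝ (ℝ × (Fin p → ℝ)) (SKKT2.EE n m q)).hasFDerivAt).prodMk
        (SKKT2.hasFDerivAt_Phi f g h zs θbar lams mus hf hg hh)
    have hTf : (T : SKKT2.XX n p m q →L[ℝ] SKKT2.XX n p m q) = Tf :=
      ContinuousLinearMap.ext fun x => rfl
    rw [hTf]
    exact h0
  have hGcd : ContDiffAt ℝ 1 G p₀ :=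
    (contDiff_fst.prodMk (SKKT2.contDiff_Phi f g h hf hg hh)).contDiffAt
  set PH := hGcd.toOpenPartialHomeomorph G hGfd one_ne_zero with hPHdef
  have hmem : p₀ ∈ PH.source := hGcd.mem_toOpenPartialHomeomorph_source hGfd one_ne_zero
  have hPHG : ∀ x : SKKT2.XX n p m q, PH x = (x.1, SKKT2.Phi f g h x) := fun x => rfl
  have hb0 : G p₀ = ((((0 : ℝ), θbar) : ℝ × (Fin p → ℝ)), (0 : SKKT2.EE n m q)) := by
    show (p₀.1, SKKT2.Phi f g h p₀) = _
    rw [show SKKT2.Phi f g h p₀ = 0 from hPhi0]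
  have htgt : ((((0 : ℝ), θbar) : ℝ × (Fin p → ℝ)), (0 : SKKT2.EE n m q)) ∈ PH.target := by
    have := hGcd.image_mem_toOpenPartialHomeomorph_target hGfd one_ne_zero
    rwa [hb0] at this
  have hsymm_cd : ContDiffAt ℝ 1 (⇑PH.symm)
      ((((0 : ℝ), θbar) : ℝ × (Fin p → ℝ)), (0 : SKKT2.EE n m q)) := by
    have := hGcd.to_localInverse hGfd one_ne_zero
    rw [hb0] at this
    exact this
  -- the implicit function
  set ψ : ℝ × (Fin p → ℝ) → SKKT2.EE n m q :=
    fun a => (PH.symm ((a, (0 : SKKT2.EE n m q)) : SKKT2.XX n p m q)).2 with hψdef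
  have hψcd : ContDiffAt ℝ 1 ψ ((0 : ℝ), θbar) := by
    have hinc : ContDiffAt ℝ 1
        (fun a : ℝ × (Fin p → ℝ) => ((a, (0 : SKKT2.EE n m q)) : SKKT2.XX n p m q))
        ((0 : ℝ), θbar) := (contDiff_id.prodMk contDiff_const).contDiffAt
    have hcomp1 : ContDiffAt ℝ 1
        (fun a : ℝ × (Fin p → ℝ) => PH.symm ((a, (0 : SKKT2.EE n m q)) : SKKT2.XX n p m q))
        ((0 : ℝ), θbar) := ContDiffAt.comp _ hsymm_cd hinc
    exact ContDiffAt.comp _ contDiff_snd.contDiffAt hcomp1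
  have hψcont : ContinuousAt ψ ((0 : ℝ), θbar) := hψcd.continuousAt
  have hψ0 : ψ ((0 : ℝ), θbar) = (zs, lams, mus) := by
    have hPH0 : PH.symm ((((0 : ℝ), θbar) : ℝ × (Fin p → ℝ)), (0 : SKKT2.EE n m q)) = p₀ := by
      rw [← hb0]
      exact PH.left_inv hmem
    rw [hψdef]
    simp only []
    rw [hPH0]
  -- key identity on a good set
  have hkey : ∀ a : ℝ × (Fin p → ℝ),
      ((a, (0 : SKKT2.EE n m q)) : SKKT2.XX n p m q) ∈ PH.target →
      SKKT2.Phi f g h ((a, ψ a) : SKKT2.XX n p m q) = 0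
        ∧ PH.symm ((a, (0 : SKKT2.EE n m q)) : SKKT2.XX n p m q) = ((a, ψ a))
        ∧ (((a, ψ a)) : SKKT2.XX n p m q) ∈ PH.source := by
    intro a ha
    have h1 : PH (PH.symm (a, (0 : SKKT2.EE n m q))) = (a, (0 : SKKT2.EE n m q)) :=
      PH.right_inv ha
    have hsrc : PH.symm ((a, (0 : SKKT2.EE n m q)) : SKKT2.XX n p m q) ∈ PH.source :=
      PH.map_target ha
    rw [hPHG] at h1
    have hfst : (PH.symm ((a, (0 : SKKT2.EE n m q)) : SKKT2.XX n p m q)).1 = a :=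
      congrArg Prod.fst h1
    have heq : PH.symm ((a, (0 : SKKT2.EE n m q)) : SKKT2.XX n p m q) = (a, ψ a) := by
      rw [Prod.ext_iff]
      exact ⟨hfst, rfl⟩
    have hsnd : SKKT2.Phi f g h (PH.symm ((a, (0 : SKKT2.EE n m q)) : SKKT2.XX n p m q))
        = 0 := congrArg Prod.snd h1
    refine ⟨?_, heq, heq ▸ hsrc⟩
    rw [← heq]
    exact hsnd
  -- sign conditions hold eventually
  have hsign : ∀ᶠ a : ℝ × (Fin p → ℝ) in 𝓝 ((0 : ℝ), θbar),
      ∀ i, h (ψ a).1 a.2 i < 0 ∨ 0 < (ψ a).2.2 i := by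
    rw [eventually_all]
    intro i
    rcases (hfeas_h i).lt_or_eq with hi | hi
    · have hc : ContinuousAt (fun a : ℝ × (Fin p → ℝ) => h (ψ a).1 a.2 i)
          ((0 : ℝ), θbar) := by
        have hm : ContinuousAt (fun a : ℝ × (Fin p → ℝ) =>
            (((ψ a).1, a.2) : (Fin n → ℝ) × (Fin p → ℝ))) ((0 : ℝ), θbar) :=
          ContinuousAt.prodMk (continuous_fst.continuousAt.comp hψcont)
            continuous_snd.continuousAt
        exact ((SKKT2.contDiff_Ht h hh i).continuous.continuousAt).comp hm
      have hc2 : Tendsto (fun a : ℝ × (Fin p → ℝ) => h (ψ a).1 a.2 i)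
          (𝓝 ((0 : ℝ), θbar)) (𝓝 (h zs θbar i)) := by
        simpa only [ContinuousAt, hψ0] using hc
      filter_upwards [hc2.eventually_lt_const hi] with a ha using Or.inl ha
    · have hc : ContinuousAt (fun a : ℝ × (Fin p → ℝ) => (ψ a).2.2 i) ((0 : ℝ), θbar) := by
        have : ContinuousAt (fun w : SKKT2.EE n m q => w.2.2 i) (ψ ((0 : ℝ), θbar)) :=
          (continuous_apply i).continuousAt.comp
            (continuous_snd.continuousAt.comp continuous_snd.continuousAt)
        exact this.comp hψcont
      have hc2 : Tendsto (fun a : ℝ × (Fin p → ℝ) => (ψ a).2.2 i)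
          (𝓝 ((0 : ℝ), θbar)) (𝓝 (mus i)) := by
        simpa only [ContinuousAt, hψ0] using hc
      filter_upwards [hc2.eventually_const_lt (hstrict i hi)] with a ha using Or.inr ha
  -- smooth locally
  obtain ⟨O, hO_nhds, hOdiff⟩ : ∃ O ∈ 𝓝 ((0 : ℝ), θbar), ContDiffOn ℝ 1 ψ O :=
    hψcd.contDiffOn le_rfl (by simp)
  -- the good neighborhood
  have htgts : {a : ℝ × (Fin p → ℝ) |
      ((a, (0 : SKKT2.EE n m q)) : SKKT2.XX n p m q) ∈ PH.target} ∈ 𝓝 ((0 : ℝ), θbar) := by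
    have hcont : Continuous (fun a : ℝ × (Fin p → ℝ) =>
        ((a, (0 : SKKT2.EE n m q)) : SKKT2.XX n p m q)) := continuous_id.prodMk continuous_const
    exact (PH.open_target.preimage hcont).mem_nhds htgt
  have hNmem : (O ∩ ({a : ℝ × (Fin p → ℝ) |
        ((a, (0 : SKKT2.EE n m q)) : SKKT2.XX n p m q) ∈ PH.target}
      ∩ {a : ℝ × (Fin p → ℝ) | ∀ i, h (ψ a).1 a.2 i < 0 ∨ 0 < (ψ a).2.2 i}))
      ∈ 𝓝 ((0 : ℝ), θbar) :=
    Filter.inter_mem hO_nhds (Filter.inter_mem htgts hsign)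
  clear_value ψ PH
  clear hψdef hPHdef hsymm_cd hmem hb0 htgt hGfd hGcd hψcd
  clear_value G T Tf Tg K Keq
  clear hPhi0 hKapp hKsymm hleft hright hsplit hbij hbij2 hGdef hTdef hTfdef hTgdef hKdef hKeqdef
  obtain ⟨ε, hεpos, hball⟩ := Metric.mem_nhds_iff.1 hNmem
  -- membership helper
  have hballmem : ∀ (τ : ℝ) (θ : Fin p → ℝ), 0 < τ → τ < ε → dist θ θbar < ε →
      ((τ, θ) : ℝ × (Fin p → ℝ)) ∈ Metric.ball ((0 : ℝ), θbar) ε := by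
    intro τ θ hτ0 hτε hθ
    rw [Metric.mem_ball, Prod.dist_eq]
    refine max_lt ?_ hθ
    rw [Real.dist_eq, sub_zero, abs_of_pos hτ0]
    exact hτε
  refine ⟨ε, hεpos, (fun τ θ => (ψ (τ, θ)).1), (fun τ θ => (ψ (τ, θ)).2.1),
    (fun τ θ => (ψ (τ, θ)).2.2), ?_, ?_⟩
  · -- main statement for each fixed τ
    rintro τ ⟨hτ0, hτε⟩
    have hθbar_mem : ((τ, θbar) : ℝ × (Fin p → ℝ)) ∈ Metric.ball ((0 : ℝ), θbar) ε :=
      hballmem τ θbar hτ0 hτε (by simpa using hεpos)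
    have hθbarN := hball hθbar_mem
    obtain ⟨hPhiτθbar, hsymmeq, hsrcτθbar⟩ := hkey (τ, θbar) hθbarN.2.1
    obtain ⟨δ, hδpos, hδsub⟩ := Metric.isOpen_iff.1 PH.open_source _ hsrcτθbar
    set U := Metric.ball θbar (min ε δ) with hUdef
    have hUnhds : U ∈ 𝓝 θbar := Metric.ball_mem_nhds θbar (lt_min hεpos hδpos)
    have hUball : ∀ θ ∈ U, ((τ, θ) : ℝ × (Fin p → ℝ)) ∈ Metric.ball ((0 : ℝ), θbar) ε := by
      intro θ hθ
      exact hballmem τ θ hτ0 hτε (lt_of_lt_of_le hθ (min_le_left _ _))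
    have hUN : ∀ θ ∈ U, ((τ, θ) : ℝ × (Fin p → ℝ)) ∈ O ∩ ({a : ℝ × (Fin p → ℝ) |
        ((a, (0 : SKKT2.EE n m q)) : SKKT2.XX n p m q) ∈ PH.target}
      ∩ {a : ℝ × (Fin p → ℝ) | ∀ i, h (ψ a).1 a.2 i < 0 ∨ 0 < (ψ a).2.2 i}) :=
      fun θ hθ => hball (hUball θ hθ)
    -- smoothness on U
    have hmapsTo : Set.MapsTo (fun θ : Fin p → ℝ => ((τ, θ) : ℝ × (Fin p → ℝ))) U O :=
      fun θ hθ => (hUN θ hθ).1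
    have hψU : ContDiffOn ℝ 1 (fun θ : Fin p → ℝ => ψ (τ, θ)) U :=
      hOdiff.comp ((contDiff_const.prodMk contDiff_id).contDiffOn) hmapsTo
    have hzcU : ContDiffOn ℝ 1 (fun θ : Fin p → ℝ => (ψ (τ, θ)).1) U :=
      contDiff_fst.comp_contDiffOn hψU
    have hlcU : ContDiffOn ℝ 1 (fun θ : Fin p → ℝ => (ψ (τ, θ)).2.1) U :=
      (contDiff_fst.comp contDiff_snd).comp_contDiffOn hψU
    have hmcU : ContDiffOn ℝ 1 (fun θ : Fin p → ℝ => (ψ (τ, θ)).2.2) U :=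
      (contDiff_snd.comp contDiff_snd).comp_contDiffOn hψU
    refine ⟨U, hUnhds, hzcU, hlcU, hmcU, ?_, ?_⟩
    · -- the smoothed KKT equations hold
      intro θ hθ
      obtain ⟨hPhiτθ, _, _⟩ := hkey (τ, θ) (hUN θ hθ).2.1
      obtain ⟨e1, e2, e3⟩ := (hPhiIff τ θ (ψ (τ, θ))).1 hPhiτθ
      have e3' : ∀ i, -((ψ (τ, θ)).2.2 i * h (ψ (τ, θ)).1 θ i) = τ := fun i => by
        have := e3 i
        linarith
      have hdichot := (hUN θ hθ).2.2
      have hsigns : ∀ i, h (ψ (τ, θ)).1 θ i < 0 ∧ 0 < (ψ (τ, θ)).2.2 i := by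
        intro i
        have hprod : (ψ (τ, θ)).2.2 i * h (ψ (τ, θ)).1 θ i < 0 := by
          have := e3' i
          linarith
        rcases mul_neg_iff.1 hprod with ⟨hp1, hp2⟩ | ⟨hp1, hp2⟩
        · exact ⟨hp2, hp1⟩
        · rcases hdichot i with hd | hd
          · exact absurd hp2 (not_lt.2 hd.le)
          · exact absurd hd (not_lt.2 hp1.le)
      exact ⟨e1, e2, fun i => (hsigns i).1, fun i => (hsigns i).2, e3'⟩
    · -- local uniqueness
      refine ⟨Metric.ball (ψ (τ, θbar)) δ, Metric.ball_mem_nhds _ hδpos, ?_⟩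
      intro θ hθ w hw hkkt
      have hsrcw : (((τ, θ), w) : SKKT2.XX n p m q) ∈ PH.source := by
        apply hδsub
        rw [Metric.mem_ball, Prod.dist_eq]
        refine max_lt ?_ hw
        rw [Prod.dist_eq]
        refine max_lt ?_ (lt_of_lt_of_le hθ (min_le_right _ _))
        simpa using hδpos
      obtain ⟨hPhiτθ, hsymmτθ, hsrcτθ⟩ := hkey (τ, θ) (hUN θ hθ).2.1
      have hPhiw : SKKT2.Phi f g h (((τ, θ), w) : SKKT2.XX n p m q) = 0 := by
        refine (hPhiIff τ θ w).2 ⟨hkkt.1, hkkt.2.1, fun i => ?_⟩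
        have := hkkt.2.2.2.2 i
        linarith
      have hGeq : PH (((τ, θ), w) : SKKT2.XX n p m q)
          = PH (((τ, θ), ψ (τ, θ)) : SKKT2.XX n p m q) := by
        rw [hPHG, hPHG, hPhiw, hPhiτθ]
      have hinj := PH.injOn hsrcw hsrcτθ hGeq
      have : w = ψ (τ, θ) := congrArg Prod.snd hinj
      rw [this]
  · -- convergence along the central path
    have h2 : ContinuousAt (fun τ : ℝ => ψ (τ, θbar)) 0 := by
      have hf2 : ContinuousAt (fun τ : ℝ => ((τ, θbar) : ℝ × (Fin p → ℝ))) 0 :=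
        (continuous_id.prodMk continuous_const).continuousAt
      exact ContinuousAt.comp (f := fun τ : ℝ => ((τ, θbar) : ℝ × (Fin p → ℝ))) (x := (0:ℝ)) hψcont hf2
    have h3 : Tendsto (fun τ : ℝ => ψ (τ, θbar)) (𝓝 0) (𝓝 (zs, lams, mus)) := by
      simpa only [ContinuousAt, hψ0] using h2
    exact h3.mono_left nhdsWithin_le_nhds
end
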